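/- arXiv:2105.14618 — 5 statements merged into one kernel-verified Lean document; each statement's English description precedes it below -/
import Mathlib

section
/- Let ℓ ≥ 2 be an integer and F > 0 a real number. Let e₁, …, e_ℓ be independent real-valued random variables, each distributed according to the Gaussian measure with mean 0 and variance 2F (the 2-stable distribution with scale F). Then E[ ∏_{k=1}^{ℓ} |e_k|^{2/ℓ} ] = F · ( (2/π) · Γ(2/ℓ) · Γ(1 − 1/ℓ) · sin(π/ℓ) )^{ℓ}. Consequently the geometric mean estimator ĥ := ( ∏_{k=1}^{ℓ} |e_k|^{2/ℓ} ) / ( (2/π) Γ(2/ℓ) Γ(1 − 1/ℓ) sin(π/ℓ) )^{ℓ} satisfies E[ĥ] = F. -/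
open MeasureTheory ProbabilityTheory Finset Real
open scoped NNReal ENNReal

private lemma integral_prod_indep_nonneg
    {Ω : Type*} [MeasurableSpace Ω] (μ : Measure Ω) [IsProbabilityMeasure μ]
    {ι : Type*} (f : ι → Ω → ℝ)
    (hmeas : ∀ i, Measurable (f i)) (hnn : ∀ i ω, 0 ≤ f i ω)
    (hindep : iIndepFun f μ)
    (s : Finset ι) :
    ∫ ω, ∏ i ∈ s, f i ω ∂μ = ∏ i ∈ s, ∫ ω, f i ω ∂μ := by
  induction s using Finset.cons_induction with
  | empty => simp
  | cons i s hi ih =>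
    simp only [Finset.prod_cons]
    have hind : IndepFun (f i) (∏ j ∈ s, f j) μ :=
      (hindep.indepFun_finsetProd_of_notMem hmeas hi).symm
    have hP : (∏ j ∈ s, f j) = fun ω => ∏ j ∈ s, f j ω := by
      funext ω; simp [Finset.prod_apply]
    have h := hind.integral_mul_eq_mul_integral
      (hmeas i).aestronglyMeasurable
      (by rw [hP]; exact (Finset.measurable_prod s fun j _ => hmeas j).aestronglyMeasurable)
    simp only [Pi.mul_apply, hP] at h
    calc ∫ ω, f i ω * ∏ j ∈ s, f j ω ∂μ
        = (∫ ω, f i ω ∂μ) * ∫ ω, ∏ j ∈ s, f j ω ∂μ := h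
      _ = (∫ ω, f i ω ∂μ) * ∏ j ∈ s, ∫ ω, f j ω ∂μ := by rw [ih]

private lemma gaussian_abs_rpow_moment {v q : ℝ} (hv : 0 < v) (hq : 0 < q) :
    ∫ x, |x| ^ q ∂(gaussianReal 0 v.toNNReal)
      = (2 * v) ^ (q / 2) * Real.Gamma ((q + 1) / 2) / Real.sqrt π := by
  have hv' : v.toNNReal ≠ 0 := by simp [Real.toNNReal_eq_zero, not_le, hv]
  have hcv : ((v.toNNReal : ℝ≥0) : ℝ) = v := Real.coe_toNNReal v hv.le
  rw [gaussianReal_of_var_ne_zero 0 hv']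
  have hpdf : gaussianPDF 0 v.toNNReal
      = fun x => ((Real.toNNReal (gaussianPDFReal 0 v.toNNReal x) : ℝ≥0) : ℝ≥0∞) := rfl
  rw [hpdf, integral_withDensity_eq_integral_smul
    ((measurable_gaussianPDFReal 0 v.toNNReal).real_toNNReal) _]
  have hb : (0:ℝ) < (2*v)⁻¹ := by positivity
  set c : ℝ := (Real.sqrt (2 * π * v))⁻¹ with hc
  have hstep : ∀ x : ℝ, (Real.toNNReal (gaussianPDFReal 0 v.toNNReal x) : ℝ≥0) • (|x| ^ q)
      = (fun t : ℝ => c * (t ^ q * Real.exp (-(2*v)⁻¹ * t ^ 2))) |x| := by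
    intro x
    have hnn := gaussianPDFReal_nonneg 0 v.toNNReal x
    rw [NNReal.smul_def, smul_eq_mul, Real.coe_toNNReal _ hnn]
    simp only [gaussianPDFReal, sub_zero, hcv, sq_abs]
    rw [show -x ^ 2 / (2 * v) = -(2*v)⁻¹ * x ^ 2 by ring]
    ring
  simp only [hstep]
  rw [integral_comp_abs (f := fun t : ℝ => c * (t ^ q * Real.exp (-(2*v)⁻¹ * t ^ 2)))]
  rw [integral_const_mul]
  have hconv : ∫ t in Set.Ioi (0:ℝ), t ^ q * Real.exp (-(2*v)⁻¹ * t ^ 2)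
      = ∫ t in Set.Ioi (0:ℝ), t ^ q * Real.exp (-(2*v)⁻¹ * t ^ ((2:ℕ):ℝ)) := by
    refine setIntegral_congr_fun measurableSet_Ioi fun t ht => ?_
    rw [Real.rpow_natCast]
  rw [hconv, integral_rpow_mul_exp_neg_mul_rpow (by norm_num) (by linarith) hb]
  push_cast
  rw [neg_div, Real.rpow_neg (by positivity), Real.inv_rpow (by positivity), inv_inv]
  have hs : Real.sqrt (2 * π * v) = Real.sqrt (2*v) * Real.sqrt π := by
    rw [← Real.sqrt_mul (by positivity)]; ring_nf
  have h2 : (2*v) ^ ((q+1)/2) = (2*v) ^ (q/2) * Real.sqrt (2*v) := by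
    rw [Real.sqrt_eq_rpow, ← Real.rpow_add (by positivity)]; ring_nf
  rw [hc, hs, h2]
  have h1 : Real.sqrt (2*v) ≠ 0 := by positivity
  have h3 : Real.sqrt π ≠ 0 := by positivity
  field_simp

private lemma gamma_const_eq {n : ℝ} (hn : 2 ≤ n) :
    2 / π * Real.Gamma (2 / n) * Real.Gamma (1 - 1 / n) * Real.sin (π / n)
      = (2:ℝ) ^ ((2:ℝ) / n) * Real.Gamma (1 / n + 1 / 2) / Real.sqrt π := by
  have hn0 : (0:ℝ) < n := by linarith
  have h1n : (0:ℝ) < 1 / n := by positivity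
  have hsin : 0 < Real.sin (π / n) := by
    apply Real.sin_pos_of_pos_of_lt_pi (by positivity)
    calc π / n ≤ π / 2 := by
          apply div_le_div_of_nonneg_left pi_pos.le (by norm_num) hn
      _ < π := by linarith [pi_pos]
  have hG : 0 < Real.Gamma (1 / n) := Real.Gamma_pos_of_pos h1n
  have hrefl := Real.Gamma_mul_Gamma_one_sub (1 / n)
  have hdup := Real.Gamma_mul_Gamma_add_half (1 / n)
  have hpin : π * (1 / n) = π / n := by ring
  rw [hpin] at hrefl
  have h2n : 2 * (1 / n) = 2 / n := by ring
  rw [h2n] at hdup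
  have hsq : Real.sqrt π ≠ 0 := by positivity
  refine mul_right_cancel₀ hG.ne' ?_
  have lhs : 2 / π * Real.Gamma (2 / n) * Real.Gamma (1 - 1 / n) * Real.sin (π / n)
      * Real.Gamma (1 / n) = 2 * Real.Gamma (2 / n) := by
    have : Real.Gamma (1 - 1 / n) * Real.Gamma (1 / n) = π / Real.sin (π / n) := by
      rw [mul_comm]; exact hrefl
    calc 2 / π * Real.Gamma (2 / n) * Real.Gamma (1 - 1 / n) * Real.sin (π / n)
        * Real.Gamma (1 / n)
        = 2 / π * Real.Gamma (2 / n) * Real.sin (π / n)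
          * (Real.Gamma (1 - 1 / n) * Real.Gamma (1 / n)) := by ring
      _ = 2 / π * Real.Gamma (2 / n) * Real.sin (π / n) * (π / Real.sin (π / n)) := by rw [this]
      _ = 2 * Real.Gamma (2 / n) := by field_simp
  have rhs : (2:ℝ) ^ ((2:ℝ) / n) * Real.Gamma (1 / n + 1 / 2) / Real.sqrt π
      * Real.Gamma (1 / n) = 2 * Real.Gamma (2 / n) := by
    calc (2:ℝ) ^ ((2:ℝ) / n) * Real.Gamma (1 / n + 1 / 2) / Real.sqrt π * Real.Gamma (1 / n)
        = (2:ℝ) ^ ((2:ℝ) / n) * (Real.Gamma (1 / n) * Real.Gamma (1 / n + 1 / 2))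
          / Real.sqrt π := by ring
      _ = (2:ℝ) ^ ((2:ℝ) / n) * (Real.Gamma (2 / n) * (2:ℝ) ^ (1 - 2 * (1/n)) * Real.sqrt π)
          / Real.sqrt π := by rw [hdup, h2n]
      _ = (2:ℝ) ^ ((2:ℝ) / n) * (2:ℝ) ^ (1 - 2 * (1/n)) * Real.Gamma (2 / n) := by
          field_simp
      _ = 2 * Real.Gamma (2 / n) := by
          rw [← Real.rpow_add (by norm_num : (0:ℝ) < 2)]
          rw [show (2:ℝ)/n + (1 - 2 * (1/n)) = 1 by ring, Real.rpow_one]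
  rw [lhs, rhs]

/-- Unbiasedness of the geometric mean estimator (Decode step of Fed-χ²):
for i.i.d. 2-stable samples of scale `F` (Gaussians with variance `2F`),
`E[∏ |e_k|^(2/ℓ)] = F · ((2/π)Γ(2/ℓ)Γ(1−1/ℓ)sin(π/ℓ))^ℓ`, and consequently the
normalized geometric mean estimator has expectation `F`. -/
theorem geometric_mean_estimator_unbiased
    {Ω : Type*} [MeasurableSpace Ω] (μ : Measure Ω) [IsProbabilityMeasure μ]
    (ℓ : ℕ) (hℓ : 2 ≤ ℓ) (F : ℝ) (hF : 0 < F)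
    (e : Fin ℓ → Ω → ℝ) (he : ∀ k, Measurable (e k))
    (hindep : iIndepFun e μ)
    (hlaw : ∀ k, μ.map (e k) = gaussianReal 0 ((2 * F : ℝ).toNNReal)) :
    (∫ ω, ∏ k, |e k ω| ^ ((2 : ℝ) / ℓ) ∂μ
        = F * (2 / π * Real.Gamma (2 / ℓ) * Real.Gamma (1 - 1 / ℓ) * Real.sin (π / ℓ)) ^ ℓ) ∧
      (∫ ω, (∏ k, |e k ω| ^ ((2 : ℝ) / ℓ))
          / (2 / π * Real.Gamma (2 / ℓ) * Real.Gamma (1 - 1 / ℓ) * Real.sin (π / ℓ)) ^ ℓ ∂μ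
        = F) := by
  set n : ℝ := (ℓ : ℝ) with hn
  have hn2 : (2:ℝ) ≤ n := by rw [hn]; exact_mod_cast hℓ
  have hn0 : (0:ℝ) < n := by linarith
  set q : ℝ := 2 / n with hqdef
  have hq0 : 0 < q := by positivity
  -- measurability of the transformed variables
  have hg : Measurable fun x : ℝ => |x| ^ q := by fun_prop
  have hmeas : ∀ k, Measurable fun ω => |e k ω| ^ q := fun k => hg.comp (he k)
  have hnn : ∀ (k : Fin ℓ) (ω : Ω), 0 ≤ |e k ω| ^ q := fun k ω => by positivity
  have hindep' : iIndepFun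
      (fun k => fun ω => |e k ω| ^ q) μ :=
    hindep.comp (fun _ x => |x| ^ q) fun _ => hg
  -- the single-coordinate moment
  set G : ℝ := Real.Gamma (1 / n + 1 / 2) / Real.sqrt π with hG
  have hGpos : 0 < G := by
    have := Real.Gamma_pos_of_pos (show (0:ℝ) < 1/n + 1/2 by positivity)
    positivity
  have hM : ∀ k, ∫ ω, |e k ω| ^ q ∂μ = (4 * F) ^ (1 / n) * G := by
    intro k
    have h1 : ∫ ω, |e k ω| ^ q ∂μ = ∫ x, |x| ^ q ∂(μ.map (e k)) :=
      (integral_map (he k).aemeasurable hg.aestronglyMeasurable).symm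
    rw [h1, hlaw k, gaussian_abs_rpow_moment (by linarith) hq0]
    rw [show 2 * (2 * F) = 4 * F by ring, show q / 2 = 1 / n by rw [hqdef]; ring,
      show (q + 1) / 2 = 1 / n + 1 / 2 by rw [hqdef]; ring, hG, mul_div_assoc]
  -- product of expectations
  have hprod : ∫ ω, ∏ k, |e k ω| ^ q ∂μ = ((4 * F) ^ (1 / n) * G) ^ ℓ := by
    rw [integral_prod_indep_nonneg μ _ hmeas hnn hindep' Finset.univ]
    simp [hM, Finset.prod_const, Finset.card_univ]
  -- constant identity
  set C : ℝ := 2 / π * Real.Gamma (2 / n) * Real.Gamma (1 - 1 / n) * Real.sin (π / n) with hC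
  have hCeq : C = (2:ℝ) ^ ((2:ℝ) / n) * G := by
    rw [hC, gamma_const_eq hn2, hG, mul_div_assoc]
  have hCpos : 0 < C := by
    rw [hCeq]; positivity
  have hnne : n ≠ 0 := hn0.ne'
  have hpow4F : ((4 * F) ^ (1 / n)) ^ ℓ = 4 * F := by
    rw [← Real.rpow_natCast ((4 * F) ^ (1 / n)) ℓ, ← Real.rpow_mul (by positivity), ← hn,
      one_div_mul_cancel hnne, Real.rpow_one]
  have hpow2 : ((2:ℝ) ^ ((2:ℝ) / n)) ^ ℓ = 4 := by
    rw [← Real.rpow_natCast ((2:ℝ) ^ ((2:ℝ)/n)) ℓ, ← Real.rpow_mul (by norm_num), ← hn,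
      div_mul_cancel₀ _ hnne]
    norm_num
  have hmain : ∫ ω, ∏ k, |e k ω| ^ q ∂μ = F * C ^ ℓ := by
    rw [hprod, mul_pow, hpow4F, hCeq, mul_pow, hpow2]
    ring
  constructor
  · exact hmain
  · rw [integral_div, hmain, mul_div_assoc, div_self (by positivity : C ^ ℓ ≠ 0), mul_one]
end

section
/- Let ℓ ≥ 2 and m ≥ 1 be integers, let u ∈ ℝ^m be a nonzero vector, and let (P_{k,j})_{k ∈ Fin ℓ, j ∈ Fin m} be mutually independent real-valued random variables, each distributed according to the Gaussian measure with mean 0 and variance 2. Define e_k := ∑_{j=1}^{m} P_{k,j} · u_j and ĥ := ( ∏_{k=1}^{ℓ} |e_k|^{2/ℓ} ) / ( (2/π) Γ(2/ℓ) Γ(1 − 1/ℓ) sin(π/ℓ) )^{ℓ}. Then E[ĥ] = ‖u‖₂², where ‖u‖₂² = ∑_j u_j². -/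
set_option maxHeartbeats 1000000

open MeasureTheory ProbabilityTheory Finset Real

open scoped NNReal ENNReal


lemma pdf_conv_aux {a b : ℝ≥0} (ha : a ≠ 0) (hb : b ≠ 0) (z x : ℝ) :
    gaussianPDFReal 0 a x * gaussianPDFReal 0 b (z - x)
      = gaussianPDFReal 0 (a + b) z
        * gaussianPDFReal ((a : ℝ) * z / ((a : ℝ) + b)) (a * b / (a + b)) x := by
  have hA : (0:ℝ) < a := lt_of_le_of_ne a.coe_nonneg (by exact_mod_cast (Ne.symm ha))
  have hB : (0:ℝ) < b := lt_of_le_of_ne b.coe_nonneg (by exact_mod_cast (Ne.symm hb))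
  have hAB : (0:ℝ) < (a:ℝ) + b := by positivity
  simp only [gaussianPDFReal, NNReal.coe_add, NNReal.coe_div, NNReal.coe_mul, sub_zero]
  have hc : (√(2 * π * (a:ℝ)))⁻¹ * (√(2 * π * (b:ℝ)))⁻¹
      = (√(2 * π * ((a:ℝ) + b)))⁻¹ * (√(2 * π * ((a:ℝ) * b / ((a:ℝ) + b))))⁻¹ := by
    rw [← mul_inv, ← mul_inv, ← Real.sqrt_mul (by positivity), ← Real.sqrt_mul (by positivity)]
    congr 1
    field_simp
  have he : rexp (-x ^ 2 / (2 * (a:ℝ))) * rexp (-(z - x) ^ 2 / (2 * (b:ℝ)))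
      = rexp (-z ^ 2 / (2 * ((a:ℝ) + b)))
        * rexp (-(x - (a:ℝ) * z / ((a:ℝ) + b)) ^ 2 / (2 * ((a:ℝ) * b / ((a:ℝ) + b)))) := by
    rw [← Real.exp_add, ← Real.exp_add]
    congr 1
    field_simp
    ring
  calc (√(2 * π * (a:ℝ)))⁻¹ * rexp (-x ^ 2 / (2 * (a:ℝ)))
        * ((√(2 * π * (b:ℝ)))⁻¹ * rexp (-(z - x) ^ 2 / (2 * (b:ℝ))))
      = (√(2 * π * (a:ℝ)))⁻¹ * (√(2 * π * (b:ℝ)))⁻¹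
        * (rexp (-x ^ 2 / (2 * (a:ℝ))) * rexp (-(z - x) ^ 2 / (2 * (b:ℝ)))) := by ring
    _ = _ := by rw [hc, he]; ring

lemma gaussian_prod_add (a b : ℝ≥0) :
    ((gaussianReal 0 a).prod (gaussianReal 0 b)).map (fun p : ℝ × ℝ => p.1 + p.2)
      = gaussianReal 0 (a + b) := by
  by_cases ha : a = 0
  · subst ha
    rw [gaussianReal_zero_var, Measure.dirac_prod, Measure.map_map measurable_add
      measurable_prodMk_left]
    simp [Function.comp_def, zero_add]
  by_cases hb : b = 0
  · subst hb
    rw [gaussianReal_zero_var, Measure.prod_dirac, Measure.map_map measurable_add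
      measurable_prodMk_right]
    simp [Function.comp_def, add_zero]
  have hab : a + b ≠ 0 := by
    simp only [ne_eq, add_eq_zero, not_and]
    exact fun h => (ha h).elim
  have hc : a * b / (a + b) ≠ 0 := by
    rw [ne_eq, div_eq_zero_iff]
    push_neg
    exact ⟨mul_ne_zero ha hb, hab⟩
  have hnt : ∀ (m : ℝ) (v : ℝ≥0) (x : ℝ), gaussianPDF m v x ≠ ⊤ :=
    fun _ _ _ => ENNReal.ofReal_ne_top
  ext s hs
  rw [Measure.map_apply measurable_add hs, Measure.prod_apply (measurable_add hs)]
  have h1 : ∀ x : ℝ, gaussianReal 0 b (Prod.mk x ⁻¹' ((fun p : ℝ × ℝ => p.1 + p.2) ⁻¹' s))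
      = ∫⁻ z, gaussianPDF 0 b (z - x) * s.indicator 1 z := by
    intro x
    have hpre : (Prod.mk x ⁻¹' ((fun p : ℝ × ℝ => p.1 + p.2) ⁻¹' s))
        = (fun y => x + y) ⁻¹' s := rfl
    rw [hpre, gaussianReal_apply 0 hb, ← lintegral_indicator (measurable_const_add x hs)]
    have key : ∀ y : ℝ, ((fun y => x + y) ⁻¹' s).indicator (gaussianPDF 0 b) y
        = (fun z => gaussianPDF 0 b (z - x) * s.indicator 1 z) (x + y) := by
      intro y
      by_cases hy : x + y ∈ s
      · simp [Set.indicator, hy, Set.mem_preimage, add_sub_cancel_left]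
      · simp [Set.indicator, hy, Set.mem_preimage]
    simp_rw [key]
    exact lintegral_add_left_eq_self (fun z => gaussianPDF 0 b (z - x) * s.indicator 1 z) x
  simp_rw [h1]
  rw [gaussianReal_of_var_ne_zero 0 ha,
    lintegral_withDensity_eq_lintegral_mul _ (measurable_gaussianPDF _ _)]
  swap
  · apply Measurable.lintegral_prod_right (f := fun x z => gaussianPDF 0 b (z - x) * s.indicator 1 z)
    exact ((measurable_gaussianPDF 0 b).comp (measurable_snd.sub measurable_fst)).mul
      ((measurable_one.indicator hs).comp measurable_snd)
  simp only [Pi.mul_apply]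
  set f : ℝ → ℝ → ℝ≥0∞ :=
    fun x z => gaussianPDF 0 a x * (gaussianPDF 0 b (z - x) * s.indicator 1 z) with hf
  have hfm : Measurable (Function.uncurry f) :=
    (((measurable_gaussianPDF 0 a).comp measurable_fst).mul
      (((measurable_gaussianPDF 0 b).comp (measurable_snd.sub measurable_fst)).mul
      ((measurable_one.indicator hs).comp measurable_snd)))
  have step1 : ∫⁻ x, gaussianPDF 0 a x * ∫⁻ z, gaussianPDF 0 b (z - x) * s.indicator 1 z
      = ∫⁻ x, ∫⁻ z, f x z := by
    refine lintegral_congr fun x => ?_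
    exact (lintegral_const_mul' _ _ (hnt 0 a x)).symm
  rw [step1, lintegral_lintegral_swap hfm.aemeasurable]
  have key2 : ∀ z : ℝ, ∫⁻ x, gaussianPDF 0 a x * (gaussianPDF 0 b (z - x) * s.indicator 1 z)
      = s.indicator (gaussianPDF 0 (a + b)) z := by
    intro z
    by_cases hz : z ∈ s
    · have hpt : ∀ x : ℝ, gaussianPDF 0 a x * gaussianPDF 0 b (z - x)
          = ENNReal.ofReal (gaussianPDFReal 0 (a + b) z)
            * gaussianPDF ((a : ℝ) * z / ((a : ℝ) + b)) (a * b / (a + b)) x := by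
        intro x
        rw [gaussianPDF, gaussianPDF, ← ENNReal.ofReal_mul (gaussianPDFReal_nonneg _ _ _),
          pdf_conv_aux ha hb, ENNReal.ofReal_mul (gaussianPDFReal_nonneg _ _ _)]
        rfl
      simp only [Set.indicator_of_mem hz, Pi.one_apply, mul_one]
      simp_rw [hpt]
      rw [lintegral_const_mul' _ _ ENNReal.ofReal_ne_top, lintegral_gaussianPDF_eq_one _ hc,
        mul_one]
      rfl
    · simp [Set.indicator_of_notMem hz]
  simp_rw [hf, key2]
  rw [lintegral_indicator hs, gaussianReal_apply _ hab s]

lemma gaussian_indep_add {Ω : Type*} [MeasurableSpace Ω] {μ : Measure Ω}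
    [IsProbabilityMeasure μ] {X Y : Ω → ℝ} (hX : Measurable X) (hY : Measurable Y)
    (h : IndepFun X Y μ) {a b : ℝ≥0} (hXl : μ.map X = gaussianReal 0 a)
    (hYl : μ.map Y = gaussianReal 0 b) :
    μ.map (fun ω => X ω + Y ω) = gaussianReal 0 (a + b) := by
  have hmap : μ.map (fun ω => (X ω, Y ω)) = (μ.map X).prod (μ.map Y) :=
    (indepFun_iff_map_prod_eq_prod_map_map hX.aemeasurable hY.aemeasurable).mp h
  have : (fun ω => X ω + Y ω) = (fun p : ℝ × ℝ => p.1 + p.2) ∘ (fun ω => (X ω, Y ω)) := rfl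
  rw [this, ← Measure.map_map measurable_add (hX.prodMk hY), hmap, hXl, hYl, gaussian_prod_add]

lemma gaussian_law_sum {Ω ι : Type*} [MeasurableSpace Ω] {μ : Measure Ω}
    [IsProbabilityMeasure μ] [DecidableEq ι] {X : ι → Ω → ℝ}
    (hmeas : ∀ i, Measurable (X i))
    (hindep : iIndepFun X μ)
    {v : ι → ℝ≥0} (hlaw : ∀ i, μ.map (X i) = gaussianReal 0 (v i)) (s : Finset ι) :
    μ.map (fun ω => ∑ i ∈ s, X i ω) = gaussianReal 0 (∑ i ∈ s, v i) := by
  classical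
  induction s using Finset.induction with
  | empty =>
    simp only [Finset.sum_empty, gaussianReal_zero_var]
    rw [Measure.map_const]
    simp
  | @insert i s hi ih =>
    have hsum : Measurable (fun ω => ∑ j ∈ s, X j ω) := by
      exact Finset.measurable_sum s fun j _ => hmeas j
    have h1 : IndepFun (X i) (fun ω => ∑ j ∈ s, X j ω) μ := by
      have := (hindep.indepFun_finset_sum_of_notMem hmeas hi).symm
      have he : (∑ j ∈ s, X j) = fun ω => ∑ j ∈ s, X j ω := by
        funext ω; rw [Finset.sum_apply]
      rwa [he] at this
    have := gaussian_indep_add (hmeas i) hsum h1 (hlaw i) ih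
    simp only [Finset.sum_insert hi]
    exact this

lemma integrable_abs_rpow_mul_exp_neg_mul_sq {b : ℝ} (hb : 0 < b) {p : ℝ} (hp : -1 < p) :
    Integrable fun x : ℝ => |x| ^ p * rexp (-b * x ^ 2) := by
  have hmeas : Measurable fun x : ℝ => |x| ^ p * rexp (-b * x ^ 2) :=
    (measurable_id.abs.pow_const p).mul
      (((measurable_id.pow_const 2).const_mul (-b)).exp)
  have hIoi : IntegrableOn (fun x : ℝ => |x| ^ p * rexp (-b * x ^ 2)) (Set.Ioi 0) := by
    refine (integrableOn_rpow_mul_exp_neg_mul_sq hb hp).congr_fun ?_ measurableSet_Ioi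
    intro x hx
    simp [abs_of_pos (Set.mem_Ioi.mp hx)]
  rw [← integrableOn_univ, ← Set.Iio_union_Ici (a := (0:ℝ)), integrableOn_union,
    integrableOn_Ici_iff_integrableOn_Ioi]
  refine ⟨?_, hIoi⟩
  rw [← (Measure.measurePreserving_neg (volume : Measure ℝ)).integrableOn_comp_preimage
      (Homeomorph.neg ℝ).measurableEmbedding]
  simp only [Function.comp_def, abs_neg, neg_sq, Set.neg_preimage, Set.neg_Iio, neg_neg, neg_zero]
  exact hIoi

lemma gaussian_abs_moment {v : ℝ≥0} (hv : v ≠ 0) {p : ℝ} (hp : 0 < p) :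
    ∫⁻ x, ENNReal.ofReal (|x| ^ p) ∂(gaussianReal 0 v)
      = ENNReal.ofReal ((2 * v) ^ (p / 2) * Real.Gamma ((p + 1) / 2) / √π) := by
  have hvpos : (0:ℝ) < v := lt_of_le_of_ne v.coe_nonneg (by exact_mod_cast (Ne.symm hv))
  set w : ℝ := 2 * v with hw
  have hwpos : 0 < w := by positivity
  have hb : (0:ℝ) < w⁻¹ := by positivity
  have hmeas : Measurable fun x : ℝ => ENNReal.ofReal (|x| ^ p) :=
    (measurable_id.abs.pow_const p).ennreal_ofReal
  rw [gaussianReal_of_var_ne_zero _ hv,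
    lintegral_withDensity_eq_lintegral_mul _ (measurable_gaussianPDF _ _) hmeas]
  simp only [Pi.mul_apply, gaussianPDF]
  have hpt : ∀ x : ℝ, ENNReal.ofReal (gaussianPDFReal 0 v x) * ENNReal.ofReal (|x| ^ p)
      = ENNReal.ofReal ((√(2 * π * v))⁻¹ * (|x| ^ p * rexp (-w⁻¹ * x ^ 2))) := by
    intro x
    rw [← ENNReal.ofReal_mul (gaussianPDFReal_nonneg _ _ _)]
    congr 1
    rw [gaussianPDFReal]
    have harg : -(x - 0) ^ 2 / (2 * (v:ℝ)) = -w⁻¹ * x ^ 2 := by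
      rw [sub_zero, div_eq_mul_inv, hw]
      ring
    rw [harg]
    ring
  simp_rw [hpt]
  have hint : Integrable fun x : ℝ => (√(2 * π * v))⁻¹ * (|x| ^ p * rexp (-w⁻¹ * x ^ 2)) :=
    (integrable_abs_rpow_mul_exp_neg_mul_sq hb (by linarith)).const_mul _
  rw [← ofReal_integral_eq_lintegral_ofReal hint (ae_of_all _ fun x => by positivity)]
  congr 1
  rw [integral_const_mul]
  have h2 : (∫ x : ℝ, |x| ^ p * rexp (-w⁻¹ * x ^ 2))
      = 2 * ∫ x in Set.Ioi (0:ℝ), x ^ p * rexp (-w⁻¹ * x ^ 2) := by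
    calc ∫ x : ℝ, |x| ^ p * rexp (-w⁻¹ * x ^ 2)
        = ∫ x : ℝ, (fun t : ℝ => t ^ p * rexp (-w⁻¹ * t ^ 2)) |x| := by
          congr 1 with x
          simp [sq_abs]
      _ = 2 * ∫ x in Set.Ioi (0:ℝ), x ^ p * rexp (-w⁻¹ * x ^ 2) :=
          integral_comp_abs (f := fun t : ℝ => t ^ p * rexp (-w⁻¹ * t ^ 2))
  rw [h2]
  have hIoi : ∫ x in Set.Ioi (0:ℝ), x ^ p * rexp (-w⁻¹ * x ^ 2)
      = (w⁻¹) ^ (-(p + 1) / 2) * (1 / 2) * Real.Gamma ((p + 1) / 2) := by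
    have := integral_rpow_mul_exp_neg_mul_rpow (p := 2) (q := p) (b := w⁻¹)
      (by norm_num) (by linarith) hb
    simp_rw [rpow_two] at this
    exact this
  rw [hIoi]
  have h1 : (w⁻¹) ^ (-(p + 1) / 2) = w ^ ((p + 1) / 2) := by
    rw [Real.inv_rpow hwpos.le, ← Real.rpow_neg hwpos.le]
    congr 1
    ring
  have h2' : w ^ ((p + 1) / 2) = w ^ (p / 2) * √w := by
    rw [Real.sqrt_eq_rpow, ← Real.rpow_add hwpos]
    congr 1
    ring
  have h3 : √(2 * π * v) = √π * √w := by
    rw [← Real.sqrt_mul pi_pos.le]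
    congr 1
    rw [hw]; ring
  have hsp : √π ≠ 0 := by positivity
  have hsw : √w ≠ 0 := by positivity
  rw [h1, h2', h3]
  field_simp

lemma scalar_identity (ℓ : ℕ) (hℓ : 2 ≤ ℓ) (N : ℝ) (hN : 0 < N) :
    ((2 * (2 * N)) ^ ((2 / (ℓ:ℝ)) / 2) * Real.Gamma ((2 / (ℓ:ℝ) + 1) / 2) / √π) ^ ℓ
      / (2 / π * Real.Gamma (2 / ℓ) * Real.Gamma (1 - 1 / ℓ) * Real.sin (π / ℓ)) ^ ℓ = N := by
  have hL2 : (2:ℝ) ≤ (ℓ:ℝ) := by exact_mod_cast hℓ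
  have hLpos : (0:ℝ) < (ℓ:ℝ) := by linarith
  set s : ℝ := 1 / (ℓ:ℝ) with hsdef
  have hs0 : 0 < s := by positivity
  have hs2 : s ≤ 1 / 2 := by
    rw [hsdef]
    rw [div_le_div_iff₀ hLpos two_pos]
    linarith
  have hA : 0 < Real.Gamma s := Real.Gamma_pos_of_pos hs0
  have hB : 0 < Real.Gamma (s + 1 / 2) := Real.Gamma_pos_of_pos (by linarith)
  have hS : 0 < Real.sin (π * s) := by
    apply Real.sin_pos_of_pos_of_lt_pi (by positivity)
    calc π * s ≤ π * (1 / 2) := by nlinarith [pi_pos]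
      _ < π := by nlinarith [pi_pos]
  have hsp : (0:ℝ) < √π := Real.sqrt_pos.mpr pi_pos
  have hD : (0:ℝ) < (2:ℝ) ^ (1 - 2 * s) := by positivity
  set A := Real.Gamma s
  set B := Real.Gamma (s + 1 / 2)
  set S := Real.sin (π * s)
  set D := (2:ℝ) ^ (1 - 2 * s)
  have hdup : Real.Gamma (2 * s) = A * B / (D * √π) := by
    rw [eq_div_iff (by positivity), ← mul_assoc]
    exact (Real.Gamma_mul_Gamma_add_half s).symm
  have hrefl : Real.Gamma (1 - s) = π / (S * A) := by
    rw [eq_div_iff (by positivity)]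
    calc Real.Gamma (1 - s) * (S * A) = (A * Real.Gamma (1 - s)) * S := by ring
      _ = (π / S) * S := by rw [Real.Gamma_mul_Gamma_one_sub]
      _ = π := div_mul_cancel₀ _ (ne_of_gt hS)
  -- rewrite the goal in terms of s
  have e1 : 2 / (ℓ:ℝ) = 2 * s := by rw [hsdef]; ring
  have e2 : 1 - 1 / (ℓ:ℝ) = 1 - s := by rw [hsdef]
  have e3 : π / (ℓ:ℝ) = π * s := by rw [hsdef]; ring
  have e4 : (2 / (ℓ:ℝ)) / 2 = s := by rw [hsdef]; ring
  have e5 : (2 / (ℓ:ℝ) + 1) / 2 = s + 1 / 2 := by rw [hsdef]; ring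
  rw [e4, e5, e1, e2, e3, hdup, hrefl]
  have hE : (2:ℝ) / π * (A * B / (D * √π)) * (π / (S * A)) * S = 2 / D * B / √π := by
    field_simp
  rw [hE]
  have h4N : (2 * (2 * N)) ^ s = 4 ^ s * N ^ s := by
    rw [show (2:ℝ) * (2 * N) = 4 * N by ring, Real.mul_rpow (by norm_num) hN.le]
  have hDE : 2 / D = 4 ^ s := by
    have h1 : (2:ℝ) / D = 2 ^ (1 - (1 - 2 * s)) := by
      rw [Real.rpow_sub two_pos, Real.rpow_one]
    rw [h1, show (1:ℝ) - (1 - 2 * s) = 2 * s by ring, Real.rpow_mul two_pos.le, rpow_two]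
    norm_num
  rw [h4N, hDE]
  have hfin : (4 ^ s * N ^ s * B / √π) ^ ℓ / (4 ^ s * B / √π) ^ ℓ = (N ^ s) ^ ℓ := by
    rw [← div_pow]
    congr 1
    field_simp
  rw [hfin, ← Real.rpow_natCast (N ^ s) ℓ, ← Real.rpow_mul hN.le]
  rw [show s * (ℓ:ℕ) = 1 by rw [hsdef]; field_simp, Real.rpow_one]

/-- End-to-end correctness in expectation of the Encode–Decode pipeline of
Fed-χ²: with i.i.d. unit-scale 2-stable projection entries, the geometric mean
estimator applied to the encoding `e k = ∑ j, P k j * u j` is an unbiased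
estimator of `‖u‖₂²`. -/
theorem encode_decode_unbiased
    {Ω : Type*} [MeasurableSpace Ω] (μ : Measure Ω) [IsProbabilityMeasure μ]
    (ℓ m : ℕ) (hℓ : 2 ≤ ℓ) (hm : 1 ≤ m)
    (u : Fin m → ℝ) (hu : u ≠ 0)
    (P : Fin ℓ → Fin m → Ω → ℝ) (hP : ∀ k j, Measurable (P k j))
    (hindep : iIndepFun
      (fun p : Fin ℓ × Fin m => P p.1 p.2) μ)
    (hlaw : ∀ k j, μ.map (P k j) = gaussianReal 0 2)
    (e : Fin ℓ → Ω → ℝ) (he : ∀ k ω, e k ω = ∑ j, P k j ω * u j)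
    (hhat : Ω → ℝ)
    (hhat_def : ∀ ω, hhat ω = (∏ k, |e k ω| ^ ((2 : ℝ) / ℓ))
      / (2 / π * Real.Gamma (2 / ℓ) * Real.Gamma (1 - 1 / ℓ) * Real.sin (π / ℓ)) ^ ℓ) :
    ∫ ω, hhat ω ∂μ = ∑ j, (u j) ^ 2 := by
  classical
  set N : ℝ := ∑ j, (u j) ^ 2 with hNdef
  have hNpos : 0 < N := by
    obtain ⟨j, hj⟩ : ∃ j, u j ≠ 0 := by
      by_contra h
      push_neg at h
      exact hu (funext h)
    exact Finset.sum_pos' (fun i _ => sq_nonneg _) ⟨j, Finset.mem_univ j, by positivity⟩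
  set p : ℝ := 2 / (ℓ:ℝ) with hpdef
  have hL2 : (2:ℝ) ≤ (ℓ:ℝ) := by exact_mod_cast hℓ
  have hLpos : (0:ℝ) < (ℓ:ℝ) := by linarith
  have hp : 0 < p := by positivity
  have he' : ∀ k, e k = fun ω => ∑ j, P k j ω * u j := fun k => funext (he k)
  have hemeas : ∀ k, Measurable (e k) := by
    intro k
    rw [he']
    exact Finset.measurable_sum _ fun j _ => (hP k j).mul_const _
  -- law of each e k
  set w : Fin ℓ × Fin m → ℝ≥0 := fun q => ‖u q.2‖₊ ^ 2 * 2 with hwdef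
  set V : ℝ≥0 := ∑ j, ‖u j‖₊ ^ 2 * 2 with hVdef
  have harg : ∀ c : ℝ, NNReal.mk (c ^ 2) (sq_nonneg c) = ‖c‖₊ ^ 2 :=
    fun c => NNReal.coe_injective (by rw [NNReal.coe_mk, NNReal.coe_pow, coe_nnnorm, Real.norm_eq_abs, sq_abs])
  have hVcoe : (V:ℝ) = 2 * N := by
    rw [hVdef, hNdef]
    push_cast
    rw [Finset.mul_sum]
    refine Finset.sum_congr rfl fun j _ => ?_
    rw [Real.norm_eq_abs, sq_abs]
    ring
  have hVne : V ≠ 0 := by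
    intro h0
    rw [h0] at hVcoe
    simp at hVcoe
    linarith
  have hXmeas : ∀ q : Fin ℓ × Fin m, Measurable (fun ω => P q.1 q.2 ω * u q.2) :=
    fun (q : Fin ℓ × Fin m) => (hP q.1 q.2).mul_const _
  have hXindep : iIndepFun
      (fun (q : Fin ℓ × Fin m) ω => P q.1 q.2 ω * u q.2) μ :=
    hindep.comp (fun q x => x * u q.2) (fun q => measurable_mul_const _)
  have hXlaw : ∀ q : Fin ℓ × Fin m, μ.map (fun ω => P q.1 q.2 ω * u q.2)
      = gaussianReal 0 (w q) := by
    intro q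
    have h1 : (fun ω => P q.1 q.2 ω * u q.2) = (fun x => x * u q.2) ∘ (P q.1 q.2) := rfl
    rw [h1, ← Measure.map_map (measurable_mul_const _) (hP q.1 q.2), hlaw q.1 q.2,
      gaussianReal_map_mul_const, mul_zero, harg]
  have helaw : ∀ k, μ.map (e k) = gaussianReal 0 V := by
    intro k
    have hs := gaussian_law_sum (X := fun q ω => P q.1 q.2 ω * u q.2) hXmeas hXindep hXlaw
      ({k} ×ˢ (Finset.univ : Finset (Fin m)))
    have hsum : e k = fun ω => ∑ q ∈ {k} ×ˢ (Finset.univ : Finset (Fin m)),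
        P q.1 q.2 ω * u q.2 := by
      funext ω
      rw [he k]
      rw [Finset.sum_product, Finset.sum_singleton]
    have hvar : ∑ q ∈ {k} ×ˢ (Finset.univ : Finset (Fin m)), w q = V := by
      rw [Finset.sum_product, Finset.sum_singleton, hVdef]
    rw [hsum, hs, hvar]
  -- moment of each coordinate
  set M : ℝ := (2 * (V:ℝ)) ^ (p / 2) * Real.Gamma ((p + 1) / 2) / √π with hMdef
  have hgam : 0 < Real.Gamma ((p + 1) / 2) := Real.Gamma_pos_of_pos (by positivity)
  have hVpos : (0:ℝ) < V := by rw [hVcoe]; linarith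
  have hMpos : 0 < M := by rw [hMdef]; positivity
  have hFmeas : Measurable fun x : ℝ => ENNReal.ofReal (|x| ^ p) :=
    (measurable_id.abs.pow_const p).ennreal_ofReal
  have hmom : ∀ k, ∫⁻ ω, ENNReal.ofReal (|e k ω| ^ p) ∂μ = ENNReal.ofReal M := by
    intro k
    rw [← lintegral_map hFmeas (hemeas k), helaw k, gaussian_abs_moment hVne hp]
  -- factorization by independence
  have hFkmeas : ∀ k, Measurable fun ω => ENNReal.ofReal (|e k ω| ^ p) :=
    fun k => ((hemeas k).abs.pow_const p).ennreal_ofReal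
  have hfact : ∀ s : Finset (Fin ℓ),
      ∫⁻ ω, ∏ k ∈ s, ENNReal.ofReal (|e k ω| ^ p) ∂μ
        = ∏ k ∈ s, ∫⁻ ω, ENNReal.ofReal (|e k ω| ^ p) ∂μ := by
    intro s
    induction s using Finset.induction with
    | empty => simp
    | @insert a s ha ih =>
      have hdisj : Disjoint ({a} ×ˢ (Finset.univ : Finset (Fin m)))
          (s ×ˢ (Finset.univ : Finset (Fin m))) := by
        rw [Finset.disjoint_left]
        rintro ⟨k, j⟩ hk hk'
        rw [Finset.mem_product, Finset.mem_singleton] at hk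
        rw [Finset.mem_product] at hk'
        exact ha (hk.1 ▸ hk'.1)
      have base := hindep.indepFun_finset ({a} ×ˢ (Finset.univ : Finset (Fin m)))
        (s ×ˢ (Finset.univ : Finset (Fin m))) hdisj (fun q => hP q.1 q.2)
      set S := ({a} ×ˢ (Finset.univ : Finset (Fin m))) with hSdef
      set T := (s ×ˢ (Finset.univ : Finset (Fin m))) with hTdef
      have hmemS : ∀ j : Fin m, ((a, j) : Fin ℓ × Fin m) ∈ S :=
        fun j => Finset.mem_product.mpr ⟨Finset.mem_singleton_self a, Finset.mem_univ j⟩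
      have hmemT : ∀ (k : {x // x ∈ s}) (j : Fin m), ((k.1, j) : Fin ℓ × Fin m) ∈ T :=
        fun k j => Finset.mem_product.mpr ⟨k.2, Finset.mem_univ j⟩
      set φ : ({x // x ∈ S} → ℝ) → ℝ≥0∞ :=
        fun g => ENNReal.ofReal (|∑ j, g ⟨(a, j), hmemS j⟩ * u j| ^ p) with hφdef
      set ψ : ({x // x ∈ T} → ℝ) → ℝ≥0∞ :=
        fun g => ∏ k ∈ s.attach, ENNReal.ofReal (|∑ j, g ⟨(k.1, j), hmemT k j⟩ * u j| ^ p)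
        with hψdef
      have hφm : Measurable φ := by
        apply Measurable.ennreal_ofReal
        apply Measurable.pow_const
        apply Measurable.abs
        exact Finset.measurable_sum _ fun j _ => (measurable_pi_apply _).mul_const _
      have hψm : Measurable ψ := by
        apply Finset.measurable_prod
        intro k _
        apply Measurable.ennreal_ofReal
        apply Measurable.pow_const
        apply Measurable.abs
        exact Finset.measurable_sum _ fun j _ => (measurable_pi_apply _).mul_const _
      have hEq1 : (fun ω => ENNReal.ofReal (|e a ω| ^ p))
          = φ ∘ (fun ω (i : {x // x ∈ S}) => P (i:Fin ℓ × Fin m).1 (i:Fin ℓ × Fin m).2 ω) := by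
        funext ω
        simp only [Function.comp_apply, hφdef]
        rw [he a ω]
      have hEq2 : (fun ω => ∏ k ∈ s, ENNReal.ofReal (|e k ω| ^ p))
          = ψ ∘ (fun ω (i : {x // x ∈ T}) => P (i:Fin ℓ × Fin m).1 (i:Fin ℓ × Fin m).2 ω) := by
        funext ω
        simp only [Function.comp_apply, hψdef]
        rw [← Finset.prod_attach s (fun k => ENNReal.ofReal (|e k ω| ^ p))]
        refine Finset.prod_congr rfl fun k _ => ?_
        rw [he k.1 ω]
      have hIndep2 : IndepFun (fun ω => ENNReal.ofReal (|e a ω| ^ p))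
          (fun ω => ∏ k ∈ s, ENNReal.ofReal (|e k ω| ^ p)) μ := by
        rw [hEq1, hEq2]
        exact base.comp hφm hψm
      simp_rw [Finset.prod_insert ha]
      rw [← ih]
      have := lintegral_mul_eq_lintegral_mul_lintegral_of_indepFun (hFkmeas a)
        (Finset.measurable_prod s fun k _ => hFkmeas k) hIndep2
      simpa using this
  -- putting it together
  have hGnonneg : ∀ ω, 0 ≤ ∏ k, |e k ω| ^ p :=
    fun ω => Finset.prod_nonneg fun k _ => by positivity
  have htop : ∫ ω, ∏ k, |e k ω| ^ p ∂μ = M ^ ℓ := by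
    rw [integral_eq_lintegral_of_nonneg_ae (ae_of_all _ hGnonneg)
      (Finset.measurable_prod _ fun k _ => (hemeas k).abs.pow_const p).aestronglyMeasurable]
    have hofr : ∀ ω, ENNReal.ofReal (∏ k, |e k ω| ^ p)
        = ∏ k, ENNReal.ofReal (|e k ω| ^ p) :=
      fun ω => ENNReal.ofReal_prod_of_nonneg fun k _ => by positivity
    simp_rw [hofr]
    rw [hfact Finset.univ, Finset.prod_congr rfl fun k _ => hmom k, Finset.prod_const,
      Finset.card_univ, Fintype.card_fin, ← ENNReal.ofReal_pow hMpos.le,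
      ENNReal.toReal_ofReal (by positivity)]
  calc ∫ ω, hhat ω ∂μ
      = ∫ ω, (∏ k, |e k ω| ^ p)
          / (2 / π * Real.Gamma (2 / ℓ) * Real.Gamma (1 - 1 / ℓ) * Real.sin (π / ℓ)) ^ ℓ ∂μ := by
        refine integral_congr_ae (ae_of_all _ fun ω => ?_)
        rw [hhat_def ω]
    _ = (∫ ω, ∏ k, |e k ω| ^ p ∂μ)
          / (2 / π * Real.Gamma (2 / ℓ) * Real.Gamma (1 - 1 / ℓ) * Real.sin (π / ℓ)) ^ ℓ :=
        integral_div _ _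
    _ = N := by
        rw [htop]
        have := scalar_identity ℓ hℓ N hNpos
        rw [hMdef, hVcoe, hpdef]
        exact this
end

section
/- Let ℓ ≥ 2 be an integer, s > 0 and ε > 0 real numbers. Let e₁, …, e_ℓ be independent real-valued random variables, each distributed according to the Gaussian measure with mean 0 and variance 2s (the 2-stable distribution with scale s). Let ŝ := ( ∏_{k=1}^{ℓ} |e_k|^{2/ℓ} ) / ( (2/π) Γ(2/ℓ) Γ(1 − 1/ℓ) sin(π/ℓ) )^{ℓ}. Set C₁ := (2/π)·arctan( log(1+ε)/π ) and t_R := C₁·log(1+ε) − C₁·γ − log( (2/π) · Γ(2C₁) · Γ(1 − C₁) · sin(πC₁) ), where γ is the Euler–Mascheroni constant. Then P( ŝ − s > ε·s ) ≤ exp( −ℓ · t_R ). -/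
open MeasureTheory ProbabilityTheory Finset Real
open scoped ENNReal NNReal

/-- The Gamma-product expression equals `2^(2x) Γ(x+1/2)/√π`. -/
lemma aux_M_eq {x : ℝ} (hx0 : 0 < x) (hx1 : x < 1) :
    2 / π * Real.Gamma (2 * x) * Real.Gamma (1 - x) * Real.sin (π * x)
      = 2 ^ (2 * x) * Real.Gamma (x + 1 / 2) / Real.sqrt π := by
  have hπ : (0:ℝ) < π := Real.pi_pos
  have hsπ : (0:ℝ) < Real.sqrt π := Real.sqrt_pos.mpr hπ
  have hs : 0 < Real.sin (π * x) :=
    Real.sin_pos_of_pos_of_lt_pi (by positivity) (by nlinarith)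
  have hΓx : 0 < Real.Gamma x := Real.Gamma_pos_of_pos hx0
  have hA : Real.Gamma x * Real.Gamma (1 - x) * Real.sin (π * x) = π := by
    rw [Real.Gamma_mul_Gamma_one_sub x, div_mul_cancel₀ _ hs.ne']
  have hdup := Real.Gamma_mul_Gamma_add_half x
  have h2 : (2:ℝ) ^ (1 - 2*x) * 2 ^ (2*x) = 2 := by
    rw [← Real.rpow_add two_pos]; norm_num
  have hu : (0:ℝ) < (2:ℝ) ^ (1 - 2*x) := Real.rpow_pos_of_pos two_pos _
  have key : (Real.Gamma x * (2:ℝ) ^ (1 - 2*x)) * (2 * Real.Gamma (2*x) * Real.Gamma (1-x) * Real.sin (π*x) * Real.sqrt π)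
      = (Real.Gamma x * (2:ℝ) ^ (1 - 2*x)) * ((2:ℝ) ^ (2*x) * Real.Gamma (x+1/2) * π) := by
    linear_combination (2 * (2:ℝ)^(1-2*x) * Real.Gamma (2*x) * Real.sqrt π) * hA
      - 2 * π * hdup - (Real.Gamma x * Real.Gamma (x+1/2) * π) * h2
  have key2 := mul_left_cancel₀ (by positivity) key
  rw [eq_div_iff hsπ.ne']
  field_simp
  rw [show ((2*x+1)/2 : ℝ) = x + 1/2 by ring]
  linear_combination key2

/-- Lower bound `log(2^(2x) Γ(x+1/2)/√π) ≥ -γ x` via convexity of `log ∘ Γ`. -/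
lemma aux_log_M_ge {x : ℝ} (hx : 0 < x) :
    -Real.eulerMascheroniConstant * x
      ≤ Real.log ((2:ℝ) ^ (2 * x) * Real.Gamma (x + 1 / 2) / Real.sqrt π) := by
  have hπ : (0:ℝ) < π := Real.pi_pos
  have hsπ : (0:ℝ) < Real.sqrt π := Real.sqrt_pos.mpr hπ
  have hG : 0 < Real.Gamma (x + 1/2) := Real.Gamma_pos_of_pos (by linarith)
  have hd : HasDerivAt (Real.log ∘ Real.Gamma)
      (-(Real.eulerMascheroniConstant + 2 * Real.log 2)) (1/2 : ℝ) := by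
    have h := (Real.hasDerivAt_Gamma_one_half).log
      (by rw [Real.Gamma_one_half_eq]; positivity)
    rw [Real.Gamma_one_half_eq] at h
    have : -Real.sqrt π * (Real.eulerMascheroniConstant + 2 * Real.log 2) / Real.sqrt π
        = -(Real.eulerMascheroniConstant + 2 * Real.log 2) := by
      field_simp
    rw [this] at h
    exact h
  have hslope := Real.convexOn_log_Gamma.le_slope_of_hasDerivWithinAt
    (Set.mem_Ioi.mpr one_half_pos)
    (Set.mem_Ioi.mpr (show (0:ℝ) < 1/2 + x by linarith))
    (by linarith) hd.hasDerivWithinAt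
  rw [slope_def_field] at hslope
  have hnum : -(Real.eulerMascheroniConstant + 2 * Real.log 2) * x
      ≤ Real.log (Real.Gamma (1/2 + x)) - Real.log (Real.Gamma (1/2)) := by
    have hx' : (1/2 + x) - (1/2 : ℝ) = x := by ring
    rw [hx'] at hslope
    have := mul_le_mul_of_nonneg_right hslope hx.le
    rwa [div_mul_cancel₀ _ hx.ne'] at this
  have hlog : Real.log ((2:ℝ) ^ (2 * x) * Real.Gamma (x + 1 / 2) / Real.sqrt π)
      = 2 * x * Real.log 2 + Real.log (Real.Gamma (x + 1/2)) - Real.log (Real.sqrt π) := by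
    rw [Real.log_div (by positivity) hsπ.ne', Real.log_mul (by positivity) hG.ne',
      Real.log_rpow two_pos]
  rw [hlog]
  have h12 : Real.log (Real.Gamma (1/2 : ℝ)) = Real.log (Real.sqrt π) := by
    rw [Real.Gamma_one_half_eq]
  rw [show (1/2 + x : ℝ) = x + 1/2 by ring, h12] at hnum
  nlinarith [hnum]

lemma aux_int_Ioi {b p : ℝ} (hb : 0 < b) (hp : 0 < p) :
    ∫ t in Set.Ioi (0:ℝ), t ^ p * Real.exp (-(b * t^2))
      = (1/b) ^ ((p+1)/2) * Real.Gamma ((p+1)/2) / 2 := by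
  have h := MeasureTheory.integral_comp_rpow_Ioi_of_pos
    (g := fun t : ℝ => t ^ ((p+1)/2 - 1) * Real.exp (-(b*t))) (p := 2) two_pos
  have h2 : ∫ t : ℝ in Set.Ioi 0, t ^ ((p+1)/2 - 1) * Real.exp (-(b*t))
      = (1/b) ^ ((p+1)/2) * Real.Gamma ((p+1)/2) :=
    Real.integral_rpow_mul_exp_neg_mul_Ioi (by linarith) hb
  rw [h2] at h
  rw [← h]
  rw [show ∀ r : ℝ, r / 2 = 2⁻¹ * r by intro r; ring]
  rw [← smul_eq_mul, ← integral_smul]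
  refine setIntegral_congr_fun measurableSet_Ioi fun x hx => ?_
  have hx : (0:ℝ) < x := hx
  have hx2 : x ^ (2:ℝ) = x ^ 2 := by
    rw [← Real.rpow_natCast x 2]; norm_num
  have hxp : (x ^ (2:ℝ)) ^ ((p+1)/2 - 1) = x ^ (p - 1) := by
    rw [← Real.rpow_mul hx.le, show (2:ℝ) * ((p+1)/2-1) = p-1 by ring]
  simp only [smul_eq_mul]
  rw [hxp, hx2]
  have : x * x ^ (p - 1) = x ^ p := by
    nth_rewrite 1 [← Real.rpow_one x]
    rw [← Real.rpow_add hx]; ring_nf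
  have h21 : x ^ ((2:ℝ) - 1) = x := by
    norm_num
  rw [h21]
  nlinarith [this, Real.exp_pos (-(b * x^2))]

lemma aux_integrable_abs {b p : ℝ} (hb : 0 < b) (hp : 0 < p) :
    MeasureTheory.Integrable (fun y : ℝ => |y| ^ p * Real.exp (-(b * y^2))) := by
  have hf : IntegrableOn (fun y : ℝ => |y| ^ p * Real.exp (-(b * y^2))) (Set.Ioi 0) := by
    refine (integrableOn_rpow_mul_exp_neg_mul_sq hb (by linarith : (-1:ℝ) < p)).congr_fun
      (fun x hx => ?_) measurableSet_Ioi
    rw [abs_of_pos (show (0:ℝ) < x from hx)]; simp only [neg_mul]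
  have int_Iic : IntegrableOn (fun y : ℝ => |y| ^ p * Real.exp (-(b * y^2))) (Set.Iic 0) := by
    rw [← Measure.map_neg_eq_self (volume : Measure ℝ)]
    have m : MeasurableEmbedding fun x : ℝ => -x := (Homeomorph.neg ℝ).measurableEmbedding
    rw [m.integrableOn_map_iff]
    simp_rw [Function.comp_def, abs_neg, Set.neg_preimage, Set.neg_Iic, neg_zero, neg_sq]
    exact Iff.mpr integrableOn_Ici_iff_integrableOn_Ioi hf
  have h := int_Iic.union hf
  rwa [Set.Iic_union_Ioi, integrableOn_univ] at h

lemma aux_gauss_moment {v p : ℝ} (hv : 0 < v) (hp : 0 < p) :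
    ∫⁻ y, ENNReal.ofReal (|y| ^ p) ∂(gaussianReal 0 v.toNNReal)
      = ENNReal.ofReal ((2*v) ^ (p/2) * Real.Gamma ((p+1)/2) / Real.sqrt π) := by
  have hπ : (0:ℝ) < π := Real.pi_pos
  have hb : (0:ℝ) < (2*v)⁻¹ := by positivity
  have hvc : (v.toNNReal : ℝ) = v := Real.coe_toNNReal v hv.le
  have hφ : Measurable fun y : ℝ => ENNReal.ofReal (|y| ^ p) :=
    (measurable_abs.pow_const p).ennreal_ofReal
  rw [gaussianReal_of_var_ne_zero 0 (by simp [Real.toNNReal_pos.mpr hv |>.ne'])]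
  rw [lintegral_withDensity_eq_lintegral_mul volume (measurable_gaussianPDF 0 _) hφ]
  have heq : ∀ y : ℝ, (gaussianPDF 0 v.toNNReal * fun y => ENNReal.ofReal (|y| ^ p)) y
      = ENNReal.ofReal ((Real.sqrt (2*π*v))⁻¹ * (|y| ^ p * Real.exp (-((2*v)⁻¹ * y^2)))) := by
    intro y
    simp only [Pi.mul_apply, gaussianPDF, gaussianPDFReal, hvc]
    rw [← ENNReal.ofReal_mul (by positivity)]
    congr 1
    rw [sub_zero]
    rw [show -y^2 / (2*v) = -((2*v)⁻¹ * y^2) by field_simp]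
    ring
  simp_rw [heq]
  have hInt : MeasureTheory.Integrable
      (fun y : ℝ => (Real.sqrt (2*π*v))⁻¹ * (|y| ^ p * Real.exp (-((2*v)⁻¹ * y^2)))) :=
    (aux_integrable_abs hb hp).const_mul _
  rw [← MeasureTheory.ofReal_integral_eq_lintegral_ofReal hInt
    (Filter.Eventually.of_forall fun y => by positivity)]
  congr 1
  rw [MeasureTheory.integral_const_mul]
  have habs : (∫ a : ℝ, |a| ^ p * Real.exp (-((2*v)⁻¹ * a^2)))
      = ∫ a : ℝ, |a| ^ p * Real.exp (-((2*v)⁻¹ * |a|^2)) := by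
    congr 1; funext a; rw [sq_abs]
  rw [habs, integral_comp_abs (f := fun t : ℝ => t ^ p * Real.exp (-((2*v)⁻¹ * t^2)))]
  rw [aux_int_Ioi hb hp]
  rw [one_div, inv_inv]
  have hsplit : (2*v) ^ ((p+1)/2) = (2*v) ^ (p/2) * Real.sqrt (2*v) := by
    rw [Real.sqrt_eq_rpow, ← Real.rpow_add (by positivity)]
    congr 1; ring
  have hsq : Real.sqrt (2*π*v) = Real.sqrt π * Real.sqrt (2*v) := by
    rw [← Real.sqrt_mul hπ.le]
    congr 1
    ring
  rw [hsplit, hsq]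
  have h1 : (0:ℝ) < Real.sqrt π := Real.sqrt_pos.mpr hπ
  have h2 : (0:ℝ) < Real.sqrt (2*v) := Real.sqrt_pos.mpr (by positivity)
  field_simp

lemma aux_lintegral_prod {Ω : Type*} [MeasurableSpace Ω] (μ : Measure Ω)
    [IsProbabilityMeasure μ] {n : ℕ} (G : Fin n → Ω → ℝ≥0∞)
    (hG : ∀ i, Measurable (G i))
    (hind : iIndepFun G μ) :
    ∫⁻ ω, ∏ i, G i ω ∂μ = ∏ i, ∫⁻ ω, G i ω ∂μ := by
  classical
  suffices h : ∀ s : Finset (Fin n),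
      ∫⁻ ω, ∏ i ∈ s, G i ω ∂μ = ∏ i ∈ s, ∫⁻ ω, G i ω ∂μ from h univ
  intro s
  induction s using Finset.induction_on with
  | empty => simp
  | @insert a s ha ih =>
    have hindep : IndepFun (G a) (∏ j ∈ s, G j) μ :=
      (hind.indepFun_finset_prod_of_notMem hG ha).symm
    have hmeas : Measurable (∏ j ∈ s, G j) := by
      rw [Finset.prod_fn]
      exact Finset.measurable_prod s fun i _ => hG i
    simp_rw [Finset.prod_insert ha]
    rw [lintegral_mul_eq_lintegral_mul_lintegral_of_indepFun'' (hG a).aemeasurable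
      ?_ ?_, ih]
    · have : (fun ω => ∏ j ∈ s, G j ω) = ∏ j ∈ s, G j := by rw [Finset.prod_fn]
      rw [this]
      exact hmeas.aemeasurable
    · have : (fun ω => ∏ j ∈ s, G j ω) = ∏ j ∈ s, G j := by rw [Finset.prod_fn]
      rw [this]
      exact hindep

/-- Right tail bound of the geometric mean estimator (Lemma 3 of the paper,
specialized to α = 2): `P(ŝ − s > ε·s) ≤ exp(−ℓ·t_R)`. -/
theorem geometric_mean_estimator_right_tail
    {Ω : Type*} [MeasurableSpace Ω] (μ : Measure Ω) [IsProbabilityMeasure μ]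
    (ℓ : ℕ) (hℓ : 2 ≤ ℓ) (s ε : ℝ) (hs : 0 < s) (hε : 0 < ε)
    (e : Fin ℓ → Ω → ℝ) (he : ∀ k, Measurable (e k))
    (hindep : iIndepFun e μ)
    (hlaw : ∀ k, μ.map (e k) = gaussianReal 0 ((2 * s : ℝ).toNNReal))
    (shat : Ω → ℝ)
    (hshat : ∀ ω, shat ω = (∏ k, |e k ω| ^ ((2 : ℝ) / ℓ))
      / (2 / π * Real.Gamma (2 / ℓ) * Real.Gamma (1 - 1 / ℓ) * Real.sin (π / ℓ)) ^ ℓ)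
    (C₁ tR : ℝ)
    (hC₁ : C₁ = 2 / π * Real.arctan (Real.log (1 + ε) / π))
    (htR : tR = C₁ * Real.log (1 + ε) - C₁ * Real.eulerMascheroniConstant
      - Real.log (2 / π * Real.Gamma (2 * C₁) * Real.Gamma (1 - C₁) * Real.sin (π * C₁))) :
    μ {ω | shat ω - s > ε * s} ≤ ENNReal.ofReal (Real.exp (-(ℓ : ℝ) * tR)) := by
  have hπ : (0:ℝ) < π := Real.pi_pos
  have hsπ : (0:ℝ) < Real.sqrt π := Real.sqrt_pos.mpr hπ
  have hℓ0 : (0:ℝ) < (ℓ:ℝ) := by positivity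
  have hℓ2 : (2:ℝ) ≤ (ℓ:ℝ) := by exact_mod_cast hℓ
  have hinvℓ0 : (0:ℝ) < 1/(ℓ:ℝ) := by positivity
  have hinvℓ1 : (1:ℝ)/(ℓ:ℝ) < 1 := by
    rw [div_lt_one hℓ0]; linarith
  have hC₁0 : 0 < C₁ := by
    rw [hC₁]
    have h1 : 0 < Real.arctan (Real.log (1 + ε) / π) := by
      have := Real.arctan_strictMono (show (0:ℝ) < Real.log (1 + ε) / π by
        exact div_pos (Real.log_pos (by linarith)) hπ
        )
      rwa [Real.arctan_zero] at this
    positivity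
  have hC₁1 : C₁ < 1 := by
    rw [hC₁]
    have h1 := Real.arctan_lt_pi_div_two (Real.log (1 + ε) / π)
    have h2 := mul_lt_mul_of_pos_left h1 (show (0:ℝ) < 2/π by positivity)
    have h3 : 2/π * (π/2) = (1:ℝ) := by field_simp
    linarith
  -- abbreviations
  have hMC : 2 / π * Real.Gamma (2*C₁) * Real.Gamma (1 - C₁) * Real.sin (π * C₁)
      = 2 ^ (2*C₁) * Real.Gamma (C₁ + 1/2) / Real.sqrt π := aux_M_eq hC₁0 hC₁1
  set M : ℝ := 2 ^ (2*C₁) * Real.Gamma (C₁ + 1/2) / Real.sqrt π with hM_def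
  have hM0 : 0 < M := by positivity
  set D : ℝ := 2 / π * Real.Gamma (2 / (ℓ:ℝ)) * Real.Gamma (1 - 1/(ℓ:ℝ)) * Real.sin (π / (ℓ:ℝ)) with hD_def
  have hDM : D = 2 ^ (2 * (1/(ℓ:ℝ))) * Real.Gamma (1/(ℓ:ℝ) + 1/2) / Real.sqrt π := by
    rw [hD_def, show (2:ℝ)/(ℓ:ℝ) = 2 * (1/(ℓ:ℝ)) by ring, show π/(ℓ:ℝ) = π * (1/(ℓ:ℝ)) by ring]
    exact aux_M_eq hinvℓ0 hinvℓ1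
  have hD0 : 0 < D := by rw [hDM]; positivity
  set c : ℝ := (1+ε) * s * D ^ ℓ with hc_def
  have hc0 : 0 < c := by positivity
  set t : ℝ := C₁ * (ℓ:ℝ) with ht_def
  have ht0 : 0 < t := by positivity
  set p : ℝ := 2 * C₁ with hp_def
  have hp0 : 0 < p := by positivity
  have hct0 : 0 < c ^ t := Real.rpow_pos_of_pos hc0 t
  -- event inclusion
  have hsub : {ω | shat ω - s > ε * s} ⊆
      {ω | ENNReal.ofReal (c ^ t) ≤ ∏ k, ENNReal.ofReal (|e k ω| ^ p)} := by
    intro ω hω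
    simp only [Set.mem_setOf_eq] at hω ⊢
    have hDl : (0:ℝ) < D ^ ℓ := pow_pos hD0 ℓ
    have h1 : (1+ε) * s < shat ω := by linarith
    rw [hshat ω] at h1
    have hY : c < ∏ k, |e k ω| ^ ((2:ℝ)/(ℓ:ℝ)) := by
      rw [hc_def]
      exact (lt_div_iff₀ hDl).mp h1
    have h2 : c ^ t ≤ (∏ k, |e k ω| ^ ((2:ℝ)/(ℓ:ℝ))) ^ t :=
      Real.rpow_le_rpow hc0.le hY.le ht0.le
    have h3 : (∏ k, |e k ω| ^ ((2:ℝ)/(ℓ:ℝ))) ^ t = ∏ k, |e k ω| ^ p := by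
      rw [← Real.finset_prod_rpow Finset.univ _
        (fun i _ => Real.rpow_nonneg (abs_nonneg _) _) t]
      refine Finset.prod_congr rfl fun k _ => ?_
      rw [← Real.rpow_mul (abs_nonneg _)]
      congr 1
      rw [ht_def]
      field_simp
      ring
    rw [← ENNReal.ofReal_prod_of_nonneg
      (fun i _ => Real.rpow_nonneg (abs_nonneg _) _)]
    exact ENNReal.ofReal_le_ofReal (h2.trans_eq h3)
  -- Markov
  set φ : ℝ → ℝ≥0∞ := fun y => ENNReal.ofReal (|y| ^ p) with hφ_def
  have hφm : Measurable φ := (measurable_abs.pow_const p).ennreal_ofReal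
  set G : Fin ℓ → Ω → ℝ≥0∞ := fun k ω => φ (e k ω) with hG_def
  have hGm : ∀ k, Measurable (G k) := fun k => hφm.comp (he k)
  have hGind : iIndepFun G μ :=
    hindep.comp (fun _ => φ) (fun _ => hφm)
  have hGprodm : Measurable fun ω => ∏ k, G k ω :=
    Finset.measurable_prod Finset.univ fun k _ => hGm k
  have hmar := meas_ge_le_lintegral_div (μ := μ) (f := fun ω => ∏ k, G k ω)
    hGprodm.aemeasurable (ε := ENNReal.ofReal (c ^ t))
    (by simp [ENNReal.ofReal_pos.mpr hct0, (ENNReal.ofReal_pos.mpr hct0).ne'])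
    ENNReal.ofReal_ne_top
  -- moments
  have hmom : ∀ k, ∫⁻ ω, G k ω ∂μ
      = ENNReal.ofReal ((2*(2*s)) ^ (p/2) * Real.Gamma ((p+1)/2) / Real.sqrt π) := by
    intro k
    have : ∫⁻ ω, G k ω ∂μ = ∫⁻ y, φ y ∂(μ.map (e k)) := (lintegral_map hφm (he k)).symm
    rw [this, hlaw k, hφ_def]
    exact aux_gauss_moment (by linarith) hp0
  set m₀ : ℝ := (2*(2*s)) ^ (p/2) * Real.Gamma ((p+1)/2) / Real.sqrt π with hm₀_def
  have hm₀0 : 0 < m₀ := by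
    rw [hm₀_def]
    have : 0 < Real.Gamma ((p+1)/2) := Real.Gamma_pos_of_pos (by linarith)
    positivity
  -- m₀ = s^C₁ * M
  have hm₀M : m₀ = s ^ C₁ * M := by
    rw [hm₀_def, hM_def]
    have h4 : (2*(2*s)) = 4 * s := by ring
    have h5 : ((4:ℝ) * s) ^ (p/2) = 4 ^ (p/2) * s ^ (p/2) :=
      Real.mul_rpow (by norm_num) hs.le
    have h6 : (4:ℝ) ^ (p/2) = 2 ^ (2*C₁) := by
      rw [show (4:ℝ) = 2 ^ (2:ℝ) by
        rw [show (2:ℝ) = ((2:ℕ):ℝ) by norm_num, Real.rpow_natCast]; norm_num]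
      rw [← Real.rpow_mul (by norm_num)]
      congr 1
      rw [hp_def]; ring
    have h7 : (p+1)/2 = C₁ + 1/2 := by rw [hp_def]; ring
    have h8 : p/2 = C₁ := by rw [hp_def]; ring
    rw [h4, h5, h6, h7, h8]
    ring
  -- final chain
  calc μ {ω | shat ω - s > ε * s}
      ≤ μ {ω | ENNReal.ofReal (c ^ t) ≤ ∏ k, ENNReal.ofReal (|e k ω| ^ p)} :=
        measure_mono hsub
    _ ≤ (∫⁻ ω, ∏ k, G k ω ∂μ) / ENNReal.ofReal (c ^ t) := hmar
    _ = (∏ k : Fin ℓ, ∫⁻ ω, G k ω ∂μ) / ENNReal.ofReal (c ^ t) := by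
        rw [aux_lintegral_prod μ G hGm hGind]
    _ = ENNReal.ofReal (m₀ ^ ℓ / c ^ t) := by
        simp_rw [hmom]
        rw [Finset.prod_const, Finset.card_univ, Fintype.card_fin,
          ← ENNReal.ofReal_pow hm₀0.le, ← ENNReal.ofReal_div_of_pos hct0]
    _ ≤ ENNReal.ofReal (Real.exp (-(ℓ:ℝ) * tR)) := by
        apply ENNReal.ofReal_le_ofReal
        -- real inequality
        have hA : Real.log m₀ = C₁ * Real.log s + Real.log M := by
          rw [hm₀M, Real.log_mul (by positivity) hM0.ne', Real.log_rpow hs]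
        have hB : Real.log c = Real.log (1+ε) + Real.log s + (ℓ:ℝ) * Real.log D := by
          rw [hc_def, Real.log_mul (by positivity) (pow_pos hD0 ℓ).ne',
            Real.log_mul (by positivity) hs.ne', Real.log_pow]
        have hT : tR = C₁ * Real.log (1+ε) - C₁ * Real.eulerMascheroniConstant
            - Real.log M := by rw [htR, hMC]
        have hDlog : -Real.eulerMascheroniConstant * (1/(ℓ:ℝ)) ≤ Real.log D := by
          rw [hDM]; exact aux_log_M_ge hinvℓ0
        have hK : 0 ≤ (C₁ * (ℓ:ℝ)) * ((ℓ:ℝ) * Real.log D + Real.eulerMascheroniConstant) := by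
          apply mul_nonneg (by positivity)
          have h9 := mul_le_mul_of_nonneg_left hDlog hℓ0.le
          have h10 : (ℓ:ℝ) * (-Real.eulerMascheroniConstant * (1/(ℓ:ℝ)))
              = -Real.eulerMascheroniConstant := by field_simp
          linarith [h9, h10.symm.le, h10.le]
        have hkey : (ℓ:ℝ) * Real.log m₀ - t * Real.log c - (-(ℓ:ℝ) * tR)
            = -((C₁ * (ℓ:ℝ)) * ((ℓ:ℝ) * Real.log D + Real.eulerMascheroniConstant)) := by
          rw [hA, hB, hT, ht_def]; ring
        have hexp : (ℓ:ℝ) * Real.log m₀ - t * Real.log c ≤ -(ℓ:ℝ) * tR := by linarith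
        have hlhs : m₀ ^ ℓ / c ^ t = Real.exp ((ℓ:ℝ) * Real.log m₀ - t * Real.log c) := by
          rw [Real.exp_sub]
          congr 1
          · rw [← Real.log_pow, Real.exp_log (pow_pos hm₀0 ℓ)]
          · rw [Real.rpow_def_of_pos hc0, mul_comm]
        rw [hlhs]
        exact Real.exp_le_exp.mpr hexp
end

section
/- Let ℓ₀ ≥ 2 be an integer, s > 0 a real number, ε a real number with 0 < ε < 1, and δ a real number with 0 < δ < 1. Define C₁ := (2/π)·arctan( log(1+ε)/π ), t_R := C₁·log(1+ε) − C₁·γ − log( (2/π) Γ(2C₁) Γ(1 − C₁) sin(πC₁) ) (γ the Euler–Mascheroni constant), C₂ := 2ε/π², and t_L := −C₂·log(1−ε) − log( −(2/π) Γ(−2C₂) Γ(1 + C₂) sin(πC₂) ) − ℓ₀·C₂·log( (2/π) Γ(2/ℓ₀) Γ(1 − 1/ℓ₀) sin(π/ℓ₀) ). Assume t_R > 0 and t_L > 0. Then for every integer ℓ with ℓ > ℓ₀ and ℓ · min(t_R, t_L) ≥ log(2/δ), if e₁, …, e_ℓ are independent real-valued random variables each distributed according to the Gaussian measure with mean 0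 and variance 2s, and ŝ := ( ∏_{k=1}^{ℓ} |e_k|^{2/ℓ} ) / ( (2/π) Γ(2/ℓ) Γ(1 − 1/ℓ) sin(π/ℓ) )^{ℓ}, then P( ŝ < (1−ε)·s ∨ ŝ > (1+ε)·s ) ≤ δ. -/
open MeasureTheory ProbabilityTheory Finset Real

open scoped NNReal ENNReal

namespace FedChi2
local notation "γ" => Real.eulerMascheroniConstant


noncomputable def F (c : ℝ) : ℝ := (4 : ℝ) ^ c * Real.Gamma (c + 1/2) / Real.sqrt π

lemma F_pos {c : ℝ} (hc : -(1/2 : ℝ) < c) : 0 < F c := by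
  have h1 : 0 < Real.Gamma (c + 1/2) := Real.Gamma_pos_of_pos (by linarith)
  have h2 : (0:ℝ) < Real.sqrt π := Real.sqrt_pos.mpr Real.pi_pos
  have h3 : (0:ℝ) < (4:ℝ) ^ c := Real.rpow_pos_of_pos (by norm_num) c
  exact div_pos (mul_pos h3 h1) h2

lemma two_rpow_two_mul (c : ℝ) : (2:ℝ) ^ (2 * c) = (4:ℝ) ^ c := by
  rw [show (4:ℝ) = (2:ℝ) ^ (2:ℝ) by
    rw [show ((2:ℝ):ℝ) = ((2:ℕ):ℝ) by norm_num, Real.rpow_natCast]; norm_num,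
    ← Real.rpow_mul (by norm_num)]

lemma gamma_expr_eq_F {c : ℝ} (h0 : 0 < c) (h1 : c < 1) :
    2 / π * Real.Gamma (2 * c) * Real.Gamma (1 - c) * Real.sin (π * c) = F c := by
  have hπ : (0:ℝ) < π := Real.pi_pos
  have hΓc : 0 < Real.Gamma c := Real.Gamma_pos_of_pos h0
  have hsin : 0 < Real.sin (π * c) := Real.sin_pos_of_pos_of_lt_pi (by positivity)
    (by nlinarith)
  have hrefl := Real.Gamma_mul_Gamma_one_sub c
  have hdup := Real.Gamma_mul_Gamma_add_half c
  have h2 : (0:ℝ) < (2:ℝ) ^ (1 - 2*c) := Real.rpow_pos_of_pos (by norm_num) _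
  have h4 : (0:ℝ) < (4:ℝ) ^ c := Real.rpow_pos_of_pos (by norm_num) _
  have hsq : (0:ℝ) < Real.sqrt π := Real.sqrt_pos.mpr hπ
  -- Γ(1-c) = π / (sin (π c) * Γ c)
  have hΓ1c : Real.Gamma (1 - c) = π / (Real.sin (π * c) * Real.Gamma c) := by
    field_simp at hrefl ⊢
    linarith [hrefl]
  -- Γ(2c) = Γ c * Γ (c+1/2) * 4^c / (2 * √π)
  have hΓ2c : Real.Gamma (2 * c) = Real.Gamma c * Real.Gamma (c + 1/2) * (4:ℝ)^c / (2 * Real.sqrt π) := by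
    have h24 : (2:ℝ) ^ (1 - 2*c) = 2 / (4:ℝ) ^ c := by
      rw [Real.rpow_sub (by norm_num), Real.rpow_one, two_rpow_two_mul]
    rw [h24] at hdup
    field_simp at hdup ⊢
    nlinarith [hdup]
  rw [hΓ1c, hΓ2c, F]
  field_simp

lemma neg_gamma_expr_eq_F {c : ℝ} (h0 : 0 < c) (h1 : c < 1/2) :
    -(2 / π) * Real.Gamma (-(2 * c)) * Real.Gamma (1 + c) * Real.sin (π * c) = F (-c) := by
  have hπ : (0:ℝ) < π := Real.pi_pos
  have hΓ1c : 0 < Real.Gamma (1 - c) := Real.Gamma_pos_of_pos (by linarith)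
  have hsin : 0 < Real.sin (π * c) := Real.sin_pos_of_pos_of_lt_pi (by positivity)
    (by nlinarith)
  have hΓc : 0 < Real.Gamma c := Real.Gamma_pos_of_pos h0
  -- Γ (1+c) = c * Γ c
  have hA : Real.Gamma (1 + c) = c * Real.Gamma c := by
    rw [add_comm, Real.Gamma_add_one h0.ne']
  -- Γ c * sin (π c) = π / Γ (1-c)
  have hrefl := Real.Gamma_mul_Gamma_one_sub c
  -- Γ (1 - 2c) = -2c * Γ (-2c)
  have hB : Real.Gamma (1 - 2*c) = (-(2*c)) * Real.Gamma (-(2*c)) := by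
    rw [show (1 - 2*c : ℝ) = -(2*c) + 1 by ring, Real.Gamma_add_one (by nlinarith)]
  -- duplication at 1/2 - c
  have hdup := Real.Gamma_mul_Gamma_add_half (1/2 - c)
  rw [show (1/2 - c + 1/2 : ℝ) = 1 - c by ring, show (2 * (1/2 - c) : ℝ) = 1 - 2*c by ring] at hdup
  have h24 : (2:ℝ) ^ (1 - (1 - 2*c)) = (4:ℝ) ^ c := by
    rw [show (1 - (1 - 2*c) : ℝ) = 2 * c by ring, two_rpow_two_mul]
  rw [h24] at hdup
  have h4 : (0:ℝ) < (4:ℝ) ^ c := Real.rpow_pos_of_pos (by norm_num) _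
  have h4' : (0:ℝ) < (4:ℝ) ^ (-c) := Real.rpow_pos_of_pos (by norm_num) _
  have h44 : (4:ℝ) ^ (-c) * (4:ℝ) ^ c = 1 := by
    rw [← Real.rpow_add (by norm_num)]; simp
  have hsq : (0:ℝ) < Real.sqrt π := Real.sqrt_pos.mpr hπ
  have hΓh : 0 < Real.Gamma (1/2 - c) := Real.Gamma_pos_of_pos (by linarith)
  have h4inv : (4:ℝ) ^ (-c) = ((4:ℝ)^c)⁻¹ := Real.rpow_neg (by norm_num) c
  have hΓn : Real.Gamma (-(2*c)) = Real.Gamma (1 - 2*c) / (-(2*c)) := by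
    rw [hB]; field_simp
  rw [F, hA, show (-c + 1/2 : ℝ) = 1/2 - c by ring, hΓn, h4inv]
  set A := Real.Gamma (1/2 - c) with hAdef
  set B := Real.Gamma (1 - c) with hBdef
  set C := Real.Gamma c with hCdef
  set D := Real.Gamma (1 - 2*c) with hDdef
  set S := Real.sin (π * c) with hSdef
  set Q := (4:ℝ) ^ c with hQdef
  -- hrefl : C * B = π / S ; hdup : A * B = D * Q * √π
  have hS0 : S ≠ 0 := ne_of_gt hsin
  have hrefl' : C * B * S = π := by
    field_simp at hrefl; linarith
  have hc0 : c ≠ 0 := h0.ne'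
  field_simp
  linear_combination (-C*S) * hdup + A * hrefl'





noncomputable def h (t : ℝ) : ℝ := t * Real.log 4 + Real.log (Real.Gamma (t + 1/2))

lemma convexOn_h : ConvexOn ℝ (Set.Ioi (-(1/2:ℝ))) h := by
  constructor
  · exact convex_Ioi _
  · intro x hx y hy a b ha hb hab
    have hx' : x + 1/2 ∈ Set.Ioi (0:ℝ) := by simp only [Set.mem_Ioi] at hx ⊢; linarith
    have hy' : y + 1/2 ∈ Set.Ioi (0:ℝ) := by simp only [Set.mem_Ioi] at hy ⊢; linarith
    have := Real.convexOn_log_Gamma.2 hx' hy' ha hb hab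
    simp only [Function.comp_apply, smul_eq_mul] at this
    have harg : a * (x + 1/2) + b * (y + 1/2) = a * x + b * y + 1/2 := by
      nlinarith [hab]
    rw [harg] at this
    unfold h
    simp only [smul_eq_mul]
    nlinarith [this, hab]

lemma hasDerivAt_h : HasDerivAt h (-γ) 0 := by
  have h1 : HasDerivAt (fun t : ℝ => Real.Gamma (t + 1/2)) (-Real.sqrt π * (γ + 2 * Real.log 2)) 0 := by
    have := Real.hasDerivAt_Gamma_one_half
    have h2 : HasDerivAt (fun t : ℝ => Real.Gamma (t + 1/2)) (-Real.sqrt π * (γ + 2 * Real.log 2)) (0 : ℝ) := by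
      have hg : HasDerivAt (fun t : ℝ => t + 1/2) 1 0 := (hasDerivAt_id (0:ℝ)).add_const _
      have hΓ : HasDerivAt Real.Gamma (-Real.sqrt π * (γ + 2 * Real.log 2))
          ((fun t : ℝ => t + 1/2) 0) := by simpa using this
      have h5 := hΓ.comp 0 hg
      rw [mul_one] at h5
      exact h5
    exact h2
  have hne : Real.Gamma ((0:ℝ) + 1/2) ≠ 0 := by
    rw [zero_add, Real.Gamma_one_half_eq]
    positivity
  have h2 : HasDerivAt (fun t : ℝ => Real.log (Real.Gamma (t + 1/2)))
      (-Real.sqrt π * (γ + 2 * Real.log 2) / Real.Gamma ((0:ℝ) + 1/2)) 0 := h1.log hne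
  have h3 : HasDerivAt (fun t : ℝ => t * Real.log 4) (Real.log 4) 0 := by
    simpa using (hasDerivAt_id (0:ℝ)).mul_const (Real.log 4)
  have h4 := h3.add h2
  refine HasDerivAt.congr_deriv h4 ?_
  rw [zero_add, Real.Gamma_one_half_eq]
  have hπ : Real.sqrt π ≠ 0 := by positivity
  have hlog4 : Real.log 4 = 2 * Real.log 2 := by
    rw [show (4:ℝ) = 2^2 by norm_num, Real.log_pow]; push_cast; ring
  field_simp
  rw [hlog4]; ring


lemma log_F_eq {x : ℝ} (hx : -(1/2:ℝ) < x) : Real.log (F x) = h x - h 0 := by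
  have hΓ : 0 < Real.Gamma (x + 1/2) := Real.Gamma_pos_of_pos (by linarith)
  have h4 : (0:ℝ) < (4:ℝ) ^ x := Real.rpow_pos_of_pos (by norm_num) _
  have hsq : (0:ℝ) < Real.sqrt π := Real.sqrt_pos.mpr Real.pi_pos
  rw [F, Real.log_div (by positivity) (ne_of_gt hsq), Real.log_mul (ne_of_gt h4) (ne_of_gt hΓ),
    Real.log_rpow (by norm_num)]
  unfold h
  rw [show ((0:ℝ) + 1/2) = 1/2 from by norm_num, Real.Gamma_one_half_eq]
  ring

lemma key_lower {x : ℝ} (hx0 : 0 < x) : -γ * x ≤ Real.log (F x) := by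
  have hmem0 : (0:ℝ) ∈ Set.Ioi (-(1/2:ℝ)) := by norm_num
  have hmemx : x ∈ Set.Ioi (-(1/2:ℝ)) := by simp only [Set.mem_Ioi]; linarith
  have := convexOn_h.le_slope_of_hasDerivAt hmem0 hmemx hx0 hasDerivAt_h
  rw [slope_def_field] at this
  rw [log_F_eq (by linarith)]
  rw [sub_zero, le_div_iff₀ hx0] at this
  linarith [this]

lemma key_mono {x y : ℝ} (hx0 : 0 < x) (hxy : x ≤ y) :
    Real.log (F x) / x ≤ Real.log (F y) / y := by
  have hmem0 : (0:ℝ) ∈ Set.Ioi (-(1/2:ℝ)) := by norm_num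
  have hmx : x ∈ Set.Ioi (-(1/2:ℝ)) \ {0} := by
    constructor
    · simp only [Set.mem_Ioi]; linarith
    · simp only [Set.mem_singleton_iff]; exact hx0.ne'
  have hmy : y ∈ Set.Ioi (-(1/2:ℝ)) \ {0} := by
    constructor
    · simp only [Set.mem_Ioi]; linarith
    · simp only [Set.mem_singleton_iff]; exact (lt_of_lt_of_le hx0 hxy).ne'
  have := convexOn_h.slope_mono hmem0 hmx hmy hxy
  rw [slope_def_field, slope_def_field] at this
  rw [log_F_eq (by linarith : -(1/2:ℝ) < x), log_F_eq (by linarith : -(1/2:ℝ) < y)]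
  simpa using this



lemma integrableOn_abs_rpow_mul_exp_Ioi {b : ℝ} (hb : 0 < b) {t : ℝ} (ht : -1 < t) :
    IntegrableOn (fun x : ℝ => |x| ^ t * Real.exp (-b * x ^ 2)) (Set.Ioi 0) := by
  apply (integrableOn_rpow_mul_exp_neg_mul_sq hb ht).congr_fun ?_ measurableSet_Ioi
  intro x hx
  simp [abs_of_pos (Set.mem_Ioi.mp hx)]

lemma integrable_abs_rpow_mul_exp {b : ℝ} (hb : 0 < b) {t : ℝ} (ht : -1 < t) :
    Integrable (fun x : ℝ => |x| ^ t * Real.exp (-b * x ^ 2)) := by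
  rw [← integrableOn_univ, ← @Set.Iio_union_Ici _ _ (0 : ℝ), integrableOn_union]
  constructor
  · rw [← (Measure.measurePreserving_neg (volume : Measure ℝ)).integrableOn_comp_preimage
      (Homeomorph.neg ℝ).measurableEmbedding]
    simp only [Function.comp_def, abs_neg, neg_sq, Set.neg_preimage, Set.neg_Iio, neg_neg, neg_zero]
    exact integrableOn_abs_rpow_mul_exp_Ioi hb ht
  · rw [integrableOn_Ici_iff_integrableOn_Ioi]
    exact integrableOn_abs_rpow_mul_exp_Ioi hb ht

lemma integral_rpow_mul_exp_neg_mul_sq_Ioi {b : ℝ} (hb : 0 < b) {t : ℝ} (ht : -1 < t) :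
    ∫ x in Set.Ioi (0:ℝ), x ^ t * Real.exp (-b * x ^ 2)
      = (1/2) * ((1/b) ^ ((t+1)/2) * Real.Gamma ((t+1)/2)) := by
  have key := MeasureTheory.integral_comp_rpow_Ioi_of_pos
    (g := fun y : ℝ => (1/2) * (y ^ ((t+1)/2 - 1) * Real.exp (-(b * y)))) (p := 2) two_pos
  rw [MeasureTheory.integral_const_mul, integral_rpow_mul_exp_neg_mul_Ioi
    (by linarith : 0 < (t+1)/2) hb] at key
  rw [← key]
  apply setIntegral_congr_fun measurableSet_Ioi
  intro x hx
  have hx0 : 0 < x := Set.mem_Ioi.mp hx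
  have hx2 : x ^ (2:ℝ) = x ^ (2:ℕ) := Real.rpow_natCast x 2
  simp only [smul_eq_mul]
  rw [hx2]
  have h1 : ((x:ℝ) ^ (2:ℕ)) ^ ((t+1)/2 - 1) = x ^ (t - 1) := by
    rw [← Real.rpow_natCast x 2, ← Real.rpow_mul hx0.le]
    norm_num
    ring_nf
  rw [h1]
  have h2 : x ^ ((2:ℝ) - 1) = x := by
    norm_num
  rw [h2]
  have h3 : x * x ^ (t - 1) = x ^ t := by
    nth_rewrite 1 [← Real.rpow_one x]
    rw [← Real.rpow_add hx0]
    ring_nf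
  have h4 : -(b * x ^ (2:ℕ)) = -b * x ^ (2:ℕ) := by ring
  rw [h4]
  nlinarith [h3, Real.exp_pos (-b * x ^ (2:ℕ))]

lemma integral_abs_rpow_mul_exp {b : ℝ} (hb : 0 < b) {t : ℝ} (ht : -1 < t) :
    ∫ x : ℝ, |x| ^ t * Real.exp (-b * x ^ 2)
      = (1/b) ^ ((t+1)/2) * Real.Gamma ((t+1)/2) := by
  have hcomp : ∀ x : ℝ, |x| ^ t * Real.exp (-b * x ^ 2)
      = (fun y : ℝ => y ^ t * Real.exp (-b * y ^ 2)) |x| := by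
    intro x; simp [sq_abs]
  rw [funext hcomp, integral_comp_abs
    (f := fun y : ℝ => y ^ t * Real.exp (-b * y ^ 2)),
    integral_rpow_mul_exp_neg_mul_sq_Ioi hb ht]
  ring



lemma measurable_absRpow (t : ℝ) : Measurable (fun x : ℝ => ENNReal.ofReal (|x| ^ t)) :=
  (measurable_abs.pow_const t).ennreal_ofReal

lemma lintegral_abs_rpow_gaussianReal {V : ℝ≥0} (hV : V ≠ 0) {t : ℝ} (ht : -1 < t) :
    ∫⁻ x, ENNReal.ofReal (|x| ^ t) ∂(gaussianReal 0 V)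
      = ENNReal.ofReal ((2 * (V:ℝ)) ^ (t/2) * Real.Gamma ((t+1)/2) / Real.sqrt π) := by
  have hVpos : (0:ℝ) < V := by
    exact_mod_cast pos_iff_ne_zero.mpr hV
  have hb : (0:ℝ) < (2*(V:ℝ))⁻¹ := by positivity
  set b : ℝ := (2*(V:ℝ))⁻¹ with hbdef
  -- rewrite the measure
  rw [gaussianReal_of_var_ne_zero 0 hV,
    lintegral_withDensity_eq_lintegral_mul _ (measurable_gaussianPDF 0 V) (measurable_absRpow t)]
  -- pointwise: gaussianPDF * ofReal(|x|^t) = ofReal (pdfReal x * |x|^t)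
  have hpt : ∀ x : ℝ, (gaussianPDF 0 V * fun x => ENNReal.ofReal (|x| ^ t)) x
      = ENNReal.ofReal (gaussianPDFReal 0 V x * |x| ^ t) := by
    intro x
    simp only [Pi.mul_apply, gaussianPDF]
    rw [← ENNReal.ofReal_mul (gaussianPDFReal_nonneg 0 V x)]
  simp_rw [hpt]
  -- the real function
  have hfun : ∀ x : ℝ, gaussianPDFReal 0 V x * |x| ^ t
      = (Real.sqrt (2 * π * V))⁻¹ * (|x| ^ t * Real.exp (-b * x ^ 2)) := by
    intro x
    rw [gaussianPDFReal]
    have : -(x - 0)^2 / (2 * (V:ℝ)) = -b * x^2 := by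
      rw [hbdef]; field_simp; ring
    rw [this]; ring
  simp_rw [hfun]
  have hint : Integrable (fun x : ℝ => |x| ^ t * Real.exp (-b * x ^ 2)) :=
    integrable_abs_rpow_mul_exp hb ht
  have hint2 : Integrable (fun x : ℝ => (Real.sqrt (2 * π * V))⁻¹ * (|x| ^ t * Real.exp (-b * x ^ 2))) :=
    hint.const_mul _
  rw [← MeasureTheory.ofReal_integral_eq_lintegral_ofReal hint2 ?_]
  · congr 1
    rw [MeasureTheory.integral_const_mul, integral_abs_rpow_mul_exp hb ht]
    have h1b : (1/b) = 2*(V:ℝ) := by rw [hbdef]; field_simp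
    rw [h1b]
    -- (√(2πV))⁻¹ * ((2V)^((t+1)/2) * Γ) = (2V)^(t/2) * Γ / √π
    have h2V : (0:ℝ) < 2*(V:ℝ) := by positivity
    have hsqrt : Real.sqrt (2 * π * (V:ℝ)) = Real.sqrt π * (2*(V:ℝ)) ^ (1/2 : ℝ) := by
      rw [← Real.sqrt_eq_rpow, ← Real.sqrt_mul Real.pi_pos.le]
      congr 1; ring
    rw [hsqrt]
    have hsplit : (2*(V:ℝ)) ^ ((t+1)/2) = (2*(V:ℝ)) ^ (t/2) * (2*(V:ℝ)) ^ (1/2 : ℝ) := by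
      rw [← Real.rpow_add h2V]; congr 1; ring
    rw [hsplit]
    have hpos1 : (0:ℝ) < (2*(V:ℝ)) ^ (1/2 : ℝ) := Real.rpow_pos_of_pos h2V _
    have hpos2 : (0:ℝ) < Real.sqrt π := Real.sqrt_pos.mpr Real.pi_pos
    field_simp
  · filter_upwards with x
    have h1 : (0:ℝ) ≤ |x| ^ t := Real.rpow_nonneg (abs_nonneg x) t
    have h2 : (0:ℝ) ≤ (Real.sqrt (2 * π * V))⁻¹ := by positivity
    positivity

lemma lintegral_prod_of_indep {ι : Type*} {Ω : Type*} [MeasurableSpace Ω] {μ : Measure Ω}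
    [IsProbabilityMeasure μ] {f : ι → Ω → ℝ≥0∞} (hmeas : ∀ i, Measurable (f i))
    (hindep : iIndepFun f μ)
    (s : Finset ι) :
    ∫⁻ ω, ∏ i ∈ s, f i ω ∂μ = ∏ i ∈ s, ∫⁻ ω, f i ω ∂μ := by
  induction s using Finset.cons_induction with
  | empty => simp
  | cons i s hi ih =>
    have hprodmeas : Measurable (∏ j ∈ s, f j) := by
      rw [show (∏ j ∈ s, f j) = fun ω => ∏ j ∈ s, f j ω from funext fun ω => Finset.prod_apply ω s f]
      exact Finset.measurable_prod s (fun j _ => hmeas j)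
    have hindep2 : IndepFun (∏ j ∈ s, f j) (f i) μ :=
      hindep.indepFun_finsetProd_of_notMem hmeas hi
    have := lintegral_mul_eq_lintegral_mul_lintegral_of_indepFun (hmeas i) hprodmeas hindep2.symm
    calc ∫⁻ ω, ∏ j ∈ Finset.cons i s hi, f j ω ∂μ
        = ∫⁻ ω, (f i * ∏ j ∈ s, f j) ω ∂μ := by
          apply lintegral_congr; intro ω; simp [Finset.prod_cons]
      _ = (∫⁻ ω, f i ω ∂μ) * ∫⁻ ω, (∏ j ∈ s, f j) ω ∂μ := by
          rw [this]
      _ = (∫⁻ ω, f i ω ∂μ) * ∏ j ∈ s, ∫⁻ ω, f j ω ∂μ := by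
          rw [← ih]
          congr 1
          apply lintegral_congr; intro ω; simp
      _ = ∏ j ∈ Finset.cons i s hi, ∫⁻ ω, f j ω ∂μ := by rw [Finset.prod_cons]
  


lemma tail_bound {Ω : Type*} [MeasurableSpace Ω] (μ : Measure Ω) [IsProbabilityMeasure μ]
    {ℓ : ℕ} (e : Fin ℓ → Ω → ℝ) (hmeas : ∀ k, Measurable (e k))
    (hindep : iIndepFun e μ)
    {V : ℝ≥0} (hV : V ≠ 0) (hmap : ∀ k, μ.map (e k) = gaussianReal 0 V)
    {t : ℝ} (ht : -1 < t) {a : ℝ} (ha : 0 < a) :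
    μ {ω | a ≤ ∏ k, |e k ω| ^ t}
      ≤ ENNReal.ofReal (((2*(V:ℝ))^(t/2) * Real.Gamma ((t+1)/2) / Real.sqrt π)^ℓ / a) := by
  set M : ℝ := (2*(V:ℝ))^(t/2) * Real.Gamma ((t+1)/2) / Real.sqrt π with hM
  have hMnonneg : 0 ≤ M := by
    have h1 : (0:ℝ) < (2*(V:ℝ))^(t/2) := by
      apply Real.rpow_pos_of_pos
      have : (0:ℝ) < V := by exact_mod_cast pos_iff_ne_zero.mpr hV
      positivity
    have h2 : 0 < Real.Gamma ((t+1)/2) := Real.Gamma_pos_of_pos (by linarith)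
    have h3 : (0:ℝ) < Real.sqrt π := Real.sqrt_pos.mpr Real.pi_pos
    positivity
  set Y : Fin ℓ → Ω → ℝ≥0∞ := fun k ω => ENNReal.ofReal (|e k ω| ^ t) with hY
  have hYmeas : ∀ k, Measurable (Y k) := fun k => (measurable_absRpow t).comp (hmeas k)
  have hYindep : iIndepFun Y μ :=
    hindep.comp _ (fun _ => measurable_absRpow t)
  have hYint : ∀ k, ∫⁻ ω, Y k ω ∂μ = ENNReal.ofReal M := by
    intro k
    have h1 : ∫⁻ ω, Y k ω ∂μ = ∫⁻ x, ENNReal.ofReal (|x| ^ t) ∂(μ.map (e k)) := by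
      rw [lintegral_map (measurable_absRpow t) (hmeas k)]
    rw [h1, hmap k, lintegral_abs_rpow_gaussianReal hV ht]
  have hprodint : ∫⁻ ω, ∏ k, Y k ω ∂μ = (ENNReal.ofReal M)^ℓ := by
    rw [lintegral_prod_of_indep hYmeas hYindep]
    simp [hYint, Finset.prod_const, Finset.card_univ]
  have hprodmeas : Measurable (fun ω => ∏ k, Y k ω) :=
    Finset.measurable_prod _ (fun k _ => hYmeas k)
  have hsub : {ω | a ≤ ∏ k, |e k ω| ^ t} ⊆ {ω | ENNReal.ofReal a ≤ ∏ k, Y k ω} := by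
    intro ω hω
    simp only [Set.mem_setOf_eq] at hω ⊢
    have : (∏ k, Y k ω) = ENNReal.ofReal (∏ k, |e k ω| ^ t) := by
      rw [ENNReal.ofReal_prod_of_nonneg (fun k _ => Real.rpow_nonneg (abs_nonneg _) t)]
    rw [this]
    exact ENNReal.ofReal_le_ofReal hω
  calc μ {ω | a ≤ ∏ k, |e k ω| ^ t} ≤ μ {ω | ENNReal.ofReal a ≤ ∏ k, Y k ω} := measure_mono hsub
    _ ≤ (∫⁻ ω, ∏ k, Y k ω ∂μ) / ENNReal.ofReal a :=
        meas_ge_le_lintegral_div hprodmeas.aemeasurable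
          (by simp [ENNReal.ofReal_eq_zero]; linarith) ENNReal.ofReal_ne_top
    _ = (ENNReal.ofReal M)^ℓ / ENNReal.ofReal a := by rw [hprodint]
    _ = ENNReal.ofReal (M^ℓ) / ENNReal.ofReal a := by rw [ENNReal.ofReal_pow hMnonneg]
    _ = ENNReal.ofReal (M^ℓ / a) := (ENNReal.ofReal_div_of_pos ha).symm


end FedChi2

set_option maxHeartbeats 1000000 in
/-- Theorem 4 of the paper (utility of Fed-χ²): the geometric mean estimate ŝ
is a (1 ± ε)-multiplicative approximation of the true statistic s with
probability at least 1 − δ, provided `ℓ · min(t_R, t_L) ≥ log(2/δ)`. -/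
theorem fed_chi2_utility
    {Ω : Type*} [MeasurableSpace Ω] (μ : Measure Ω) [IsProbabilityMeasure μ]
    (ℓ₀ : ℕ) (hℓ₀ : 2 ≤ ℓ₀) (s ε δ : ℝ) (hs : 0 < s)
    (hε0 : 0 < ε) (hε1 : ε < 1) (hδ0 : 0 < δ) (hδ1 : δ < 1)
    (C₁ tR C₂ tL : ℝ)
    (hC₁ : C₁ = 2 / π * Real.arctan (Real.log (1 + ε) / π))
    (htR : tR = C₁ * Real.log (1 + ε) - C₁ * Real.eulerMascheroniConstant
      - Real.log (2 / π * Real.Gamma (2 * C₁) * Real.Gamma (1 - C₁) * Real.sin (π * C₁)))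
    (hC₂ : C₂ = 2 * ε / π ^ 2)
    (htL : tL = -C₂ * Real.log (1 - ε)
      - Real.log (-(2 / π) * Real.Gamma (-(2 * C₂)) * Real.Gamma (1 + C₂) * Real.sin (π * C₂))
      - ℓ₀ * C₂ * Real.log (2 / π * Real.Gamma (2 / ℓ₀) * Real.Gamma (1 - 1 / ℓ₀)
          * Real.sin (π / ℓ₀)))
    (htRpos : 0 < tR) (htLpos : 0 < tL) :
    ∀ ℓ : ℕ, ℓ₀ < ℓ → Real.log (2 / δ) ≤ (ℓ : ℝ) * min tR tL →
      ∀ e : Fin ℓ → Ω → ℝ, (∀ k, Measurable (e k)) →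
        iIndepFun e μ →
        (∀ k, μ.map (e k) = gaussianReal 0 ((2 * s : ℝ).toNNReal)) →
        ∀ shat : Ω → ℝ,
          (∀ ω, shat ω = (∏ k, |e k ω| ^ ((2 : ℝ) / ℓ))
            / (2 / π * Real.Gamma (2 / ℓ) * Real.Gamma (1 - 1 / ℓ) * Real.sin (π / ℓ)) ^ ℓ) →
          μ {ω | shat ω < (1 - ε) * s ∨ shat ω > (1 + ε) * s} ≤ ENNReal.ofReal δ := by
  intro ℓ hℓℓ₀ hmin e hemeas hindep hmap shat hshat
  have hπ : (0:ℝ) < π := Real.pi_pos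
  have hε1' : (0:ℝ) < 1 + ε := by linarith
  have hε1'' : (0:ℝ) < 1 - ε := by linarith
  have hlog1ε : 0 < Real.log (1+ε) := Real.log_pos (by linarith)
  have hC₁pos : 0 < C₁ := by
    rw [hC₁]
    have h1 : 0 < Real.arctan (Real.log (1+ε)/π) := by
      rw [← Real.arctan_zero]
      exact Real.arctan_strictMono (by positivity)
    positivity
  have hC₁lt : C₁ < 1 := by
    rw [hC₁]
    have h2 := Real.arctan_lt_pi_div_two (Real.log (1+ε)/π)
    rw [div_mul_eq_mul_div, div_lt_one hπ]
    linarith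
  have hC₂pos : 0 < C₂ := by rw [hC₂]; positivity
  have hC₂lt : C₂ < 1/2 := by
    rw [hC₂]
    have hπ3 : (3:ℝ) < π := Real.pi_gt_three
    have hπ2 : (9:ℝ) < π^2 := by nlinarith
    rw [div_lt_iff₀ (by positivity)]
    linarith
  have hVne : ((2*s : ℝ).toNNReal) ≠ 0 := by
    simp only [ne_eq, Real.toNNReal_eq_zero, not_le]; linarith
  have hVcoe : (((2*s : ℝ).toNNReal : ℝ)) = 2*s := Real.coe_toNNReal _ (by linarith)
  have hℓ0pos : 0 < ℓ₀ := by omega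
  have hℓpos : 0 < ℓ := by omega
  have hℓR : (0:ℝ) < (ℓ:ℝ) := by exact_mod_cast hℓpos
  have hℓ₀R : (0:ℝ) < (ℓ₀:ℝ) := by exact_mod_cast hℓ0pos
  set x : ℝ := 1/(ℓ:ℝ) with hxdef
  set y : ℝ := 1/(ℓ₀:ℝ) with hydef
  have hx0 : 0 < x := by positivity
  have hx1 : x < 1 := by
    rw [hxdef, div_lt_one hℓR]
    exact_mod_cast by omega
  have hy0 : 0 < y := by positivity
  have hy1 : y < 1 := by
    rw [hydef, div_lt_one hℓ₀R]
    exact_mod_cast by omega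
  have hxy : x ≤ y := by
    rw [hxdef, hydef]
    apply one_div_le_one_div_of_le hℓ₀R
    exact_mod_cast le_of_lt hℓℓ₀
  have hFx := FedChi2.F_pos (c := x) (by linarith)
  have hFy := FedChi2.F_pos (c := y) (by linarith)
  have hFC₁ := FedChi2.F_pos (c := C₁) (by linarith)
  have hFC₂ := FedChi2.F_pos (c := -C₂) (by linarith)
  have hGl : 2/π * Real.Gamma (2/(ℓ:ℝ)) * Real.Gamma (1 - 1/(ℓ:ℝ)) * Real.sin (π/(ℓ:ℝ))
      = FedChi2.F x := by
    have h := FedChi2.gamma_expr_eq_F hx0 hx1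
    rw [show (2:ℝ)/(ℓ:ℝ) = 2*x from by rw [hxdef]; ring,
      show π/(ℓ:ℝ) = π*x from by rw [hxdef]; ring]
    exact h
  have hGl₀ : 2/π * Real.Gamma (2/(ℓ₀:ℝ)) * Real.Gamma (1 - 1/(ℓ₀:ℝ)) * Real.sin (π/(ℓ₀:ℝ))
      = FedChi2.F y := by
    have h := FedChi2.gamma_expr_eq_F hy0 hy1
    rw [show (2:ℝ)/(ℓ₀:ℝ) = 2*y from by rw [hydef]; ring,
      show π/(ℓ₀:ℝ) = π*y from by rw [hydef]; ring]
    exact h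
  have htR' : tR = C₁ * Real.log (1+ε) - C₁ * Real.eulerMascheroniConstant
      - Real.log (FedChi2.F C₁) := by
    rw [htR, FedChi2.gamma_expr_eq_F hC₁pos hC₁lt]
  have htL' : tL = -C₂ * Real.log (1-ε) - Real.log (FedChi2.F (-C₂))
      - (ℓ₀:ℝ) * C₂ * Real.log (FedChi2.F y) := by
    rw [htL, FedChi2.neg_gamma_expr_eq_F hC₂pos hC₂lt, hGl₀]
  have hδ2 : (0:ℝ) < δ/2 := by linarith
  have hexp : ∀ u : ℝ, Real.log (2/δ) ≤ (ℓ:ℝ) * u → Real.exp (-((ℓ:ℝ) * u)) ≤ δ/2 := by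
    intro u hu
    calc Real.exp (-((ℓ:ℝ)*u)) ≤ Real.exp (-(Real.log (2/δ))) :=
          Real.exp_le_exp.mpr (by linarith)
      _ = δ/2 := by
          rw [Real.exp_neg, Real.exp_log (by positivity), inv_div]
  have hexpR : Real.exp (-((ℓ:ℝ) * tR)) ≤ δ/2 :=
    hexp tR (le_trans hmin (mul_le_mul_of_nonneg_left (min_le_left _ _) hℓR.le))
  have hexpL : Real.exp (-((ℓ:ℝ) * tL)) ≤ δ/2 :=
    hexp tL (le_trans hmin (mul_le_mul_of_nonneg_left (min_le_right _ _) hℓR.le))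
  have hxl : x * (ℓ:ℝ) = 1 := by rw [hxdef]; field_simp
  have hkey_lower : -Real.eulerMascheroniConstant ≤ (ℓ:ℝ) * Real.log (FedChi2.F x) := by
    have h := FedChi2.key_lower hx0
    have h2 := mul_le_mul_of_nonneg_left h hℓR.le
    have h3 : (ℓ:ℝ)*(-Real.eulerMascheroniConstant*x) = -Real.eulerMascheroniConstant := by
      rw [hxdef]; field_simp
    linarith
  have hkey_mono : (ℓ:ℝ) * Real.log (FedChi2.F x) ≤ (ℓ₀:ℝ) * Real.log (FedChi2.F y) := by
    have h := FedChi2.key_mono hx0 hxy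
    rw [div_le_div_iff₀ hx0 hy0] at h
    have h2 := mul_le_mul_of_nonneg_left h (by positivity : (0:ℝ) ≤ (ℓ:ℝ)*(ℓ₀:ℝ))
    have e1 : (ℓ:ℝ)*(ℓ₀:ℝ)*(Real.log (FedChi2.F x) * y) = (ℓ:ℝ)*Real.log (FedChi2.F x) := by
      rw [hydef]; field_simp
    have e2 : (ℓ:ℝ)*(ℓ₀:ℝ)*(Real.log (FedChi2.F y) * x) = (ℓ₀:ℝ)*Real.log (FedChi2.F y) := by
      rw [hxdef]; field_simp
    linarith
  -- split into the two tails
  have hsplitset : {ω | shat ω < (1 - ε) * s ∨ shat ω > (1 + ε) * s}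
      = {ω | shat ω < (1 - ε) * s} ∪ {ω | shat ω > (1 + ε) * s} := Set.setOf_or
  rw [hsplitset]
  have hhalf : ENNReal.ofReal (δ/2) + ENNReal.ofReal (δ/2) = ENNReal.ofReal δ := by
    rw [← ENNReal.ofReal_add (by linarith) (by linarith)]
    norm_num
  -- Right tail
  have hRight : μ {ω | shat ω > (1+ε)*s} ≤ ENNReal.ofReal (δ/2) := by
    set T := (1+ε)*s*(FedChi2.F x)^ℓ with hTdef
    have hTpos : 0 < T := mul_pos (mul_pos hε1' hs) (pow_pos hFx ℓ)
    set lam := (ℓ:ℝ)*C₁ with hlamdef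
    have hlampos : 0 < lam := mul_pos hℓR hC₁pos
    have haR : 0 < T ^ lam := Real.rpow_pos_of_pos hTpos _
    have hsub : {ω | shat ω > (1+ε)*s} ⊆ {ω | T^lam ≤ ∏ k, |e k ω| ^ (2*C₁)} := by
      intro ω hω
      simp only [Set.mem_setOf_eq] at hω ⊢
      rw [hshat ω, hGl] at hω
      have hP : T < ∏ k, |e k ω| ^ ((2:ℝ)/(ℓ:ℝ)) := by
        rw [gt_iff_lt, lt_div_iff₀ (pow_pos hFx ℓ)] at hω
        rw [hTdef]; linarith
      have h1 : (∏ k, |e k ω| ^ ((2:ℝ)/(ℓ:ℝ)))^lam = ∏ k, |e k ω| ^ (2*C₁) := by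
        rw [← Real.finset_prod_rpow _ _ (fun k _ => Real.rpow_nonneg (abs_nonneg _) _) lam]
        apply Finset.prod_congr rfl
        intro k _
        rw [← Real.rpow_mul (abs_nonneg _)]
        congr 1
        rw [hlamdef]
        field_simp
      rw [← h1]
      exact Real.rpow_le_rpow hTpos.le hP.le hlampos.le
    refine le_trans (measure_mono hsub) (le_trans
      (FedChi2.tail_bound μ e hemeas hindep hVne hmap
        (by linarith : (-1:ℝ) < 2*C₁) haR) ?_)
    apply ENNReal.ofReal_le_ofReal
    have hMeq : (2*(((2*s : ℝ).toNNReal : ℝ)))^((2*C₁)/2) * Real.Gamma ((2*C₁+1)/2)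
        / Real.sqrt π = s^C₁ * FedChi2.F C₁ := by
      rw [hVcoe, show ((2*C₁)/2 : ℝ) = C₁ by ring, show ((2*C₁+1)/2:ℝ) = C₁ + 1/2 by ring,
        show (2*(2*s):ℝ) = 4*s by ring, Real.mul_rpow (by norm_num) hs.le, FedChi2.F]
      ring
    rw [hMeq]
    have hTlam : T^lam = (T^C₁)^ℓ := by
      rw [hlamdef, mul_comm (ℓ:ℝ) C₁, Real.rpow_mul hTpos.le, Real.rpow_natCast]
    rw [hTlam, ← div_pow]
    have hsC₁ : (0:ℝ) < s^C₁ := Real.rpow_pos_of_pos hs _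
    have hTC₁ : (0:ℝ) < T^C₁ := Real.rpow_pos_of_pos hTpos _
    have hrpos : 0 < s^C₁ * FedChi2.F C₁ / T^C₁ := div_pos (mul_pos hsC₁ hFC₁) hTC₁
    have hr : s^C₁ * FedChi2.F C₁ / T^C₁ ≤ Real.exp (-tR) := by
      rw [← Real.exp_log hrpos]
      apply Real.exp_le_exp.mpr
      have hlogr : Real.log (s^C₁ * FedChi2.F C₁ / T^C₁)
          = C₁*Real.log s + Real.log (FedChi2.F C₁) - C₁*Real.log T := by
        rw [Real.log_div (by positivity) hTC₁.ne', Real.log_mul hsC₁.ne' hFC₁.ne',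
          Real.log_rpow hs, Real.log_rpow hTpos]
      have hlogT : Real.log T = Real.log (1+ε) + Real.log s + (ℓ:ℝ)*Real.log (FedChi2.F x) := by
        rw [hTdef, Real.log_mul (by positivity) (pow_pos hFx ℓ).ne',
          Real.log_mul hε1'.ne' hs.ne', Real.log_pow]
        try push_cast
        try ring
      rw [hlogr, hlogT, htR']
      have hkk := mul_le_mul_of_nonneg_left hkey_lower hC₁pos.le
      linarith
    calc (s^C₁ * FedChi2.F C₁ / T^C₁)^ℓ ≤ (Real.exp (-tR))^ℓ :=
          pow_le_pow_left₀ hrpos.le hr ℓ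
      _ = Real.exp (-((ℓ:ℝ)*tR)) := by
          rw [← Real.exp_nat_mul]; congr 1; ring
      _ ≤ δ/2 := hexpR
  -- Left tail
  have hLeft : μ {ω | shat ω < (1-ε)*s} ≤ ENNReal.ofReal (δ/2) := by
    set T' := (1-ε)*s*(FedChi2.F x)^ℓ with hT'def
    have hT'pos : 0 < T' := mul_pos (mul_pos hε1'' hs) (pow_pos hFx ℓ)
    set lam' := -((ℓ:ℝ)*C₂) with hlam'def
    have hlam'neg : lam' ≤ 0 := by
      rw [hlam'def]
      exact neg_nonpos.mpr (mul_pos hℓR hC₂pos).le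
    have haL : 0 < T' ^ lam' := Real.rpow_pos_of_pos hT'pos _
    set N := ⋃ k : Fin ℓ, {ω | e k ω = 0} with hNdef
    have hN : μ N = 0 := by
      apply measure_iUnion_null
      intro k
      have h0 : {ω | e k ω = 0} = e k ⁻¹' {0} := rfl
      rw [h0, ← Measure.map_apply (hemeas k) (measurableSet_singleton 0), hmap k]
      exact gaussianReal_absolutelyContinuous 0 hVne (measure_singleton 0)
    have hsubL : {ω | shat ω < (1-ε)*s} \ N
        ⊆ {ω | T'^lam' ≤ ∏ k, |e k ω| ^ (-(2*C₂))} := by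
      rintro ω ⟨hω, hωN⟩
      simp only [Set.mem_setOf_eq] at hω ⊢
      have hne : ∀ k, e k ω ≠ 0 := by
        intro k hk
        exact hωN (Set.mem_iUnion.mpr ⟨k, hk⟩)
      rw [hshat ω, hGl] at hω
      have hPpos : 0 < ∏ k, |e k ω| ^ ((2:ℝ)/(ℓ:ℝ)) :=
        Finset.prod_pos fun k _ => Real.rpow_pos_of_pos (abs_pos.mpr (hne k)) _
      have hP : ∏ k, |e k ω| ^ ((2:ℝ)/(ℓ:ℝ)) < T' := by
        rw [div_lt_iff₀ (pow_pos hFx ℓ)] at hω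
        rw [hT'def]; linarith
      have h1 : (∏ k, |e k ω| ^ ((2:ℝ)/(ℓ:ℝ)))^lam' = ∏ k, |e k ω| ^ (-(2*C₂)) := by
        rw [← Real.finset_prod_rpow _ _ (fun k _ => Real.rpow_nonneg (abs_nonneg _) _) lam']
        apply Finset.prod_congr rfl
        intro k _
        rw [← Real.rpow_mul (abs_nonneg _)]
        congr 1
        rw [hlam'def]
        field_simp
      rw [← h1]
      exact Real.rpow_le_rpow_of_nonpos hPpos hP.le hlam'neg
    have hcover : {ω | shat ω < (1-ε)*s} ⊆ ({ω | shat ω < (1-ε)*s} \ N) ∪ N := by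
      intro ω hω
      by_cases hN' : ω ∈ N
      · exact Or.inr hN'
      · exact Or.inl ⟨hω, hN'⟩
    calc μ {ω | shat ω < (1-ε)*s} ≤ μ (({ω | shat ω < (1-ε)*s} \ N) ∪ N) := measure_mono hcover
      _ ≤ μ ({ω | shat ω < (1-ε)*s} \ N) + μ N := measure_union_le _ _
      _ = μ ({ω | shat ω < (1-ε)*s} \ N) := by rw [hN, add_zero]
      _ ≤ ENNReal.ofReal (((2*(((2*s : ℝ).toNNReal : ℝ)))^((-(2*C₂))/2)
            * Real.Gamma ((-(2*C₂)+1)/2) / Real.sqrt π)^ℓ / T'^lam') := by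
          refine le_trans (measure_mono hsubL) ?_
          exact FedChi2.tail_bound μ e hemeas hindep hVne hmap
            (by linarith : (-1:ℝ) < -(2*C₂)) haL
      _ ≤ ENNReal.ofReal (δ/2) := by
          apply ENNReal.ofReal_le_ofReal
          have hMeq : (2*(((2*s : ℝ).toNNReal : ℝ)))^((-(2*C₂))/2) * Real.Gamma ((-(2*C₂)+1)/2)
              / Real.sqrt π = s^(-C₂) * FedChi2.F (-C₂) := by
            rw [hVcoe, show ((-(2*C₂))/2 : ℝ) = -C₂ by ring,
              show ((-(2*C₂)+1)/2:ℝ) = -C₂ + 1/2 by ring,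
              show (2*(2*s):ℝ) = 4*s by ring, Real.mul_rpow (by norm_num) hs.le, FedChi2.F]
            ring
          rw [hMeq]
          have hT'lam : T'^lam' = (T'^(-C₂))^ℓ := by
            rw [hlam'def, show -((ℓ:ℝ)*C₂) = -C₂ * (ℓ:ℝ) by ring,
              Real.rpow_mul hT'pos.le, Real.rpow_natCast]
          rw [hT'lam, ← div_pow]
          have hsC₂ : (0:ℝ) < s^(-C₂) := Real.rpow_pos_of_pos hs _
          have hTC₂ : (0:ℝ) < T'^(-C₂) := Real.rpow_pos_of_pos hT'pos _
          have hrpos : 0 < s^(-C₂) * FedChi2.F (-C₂) / T'^(-C₂) :=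
            div_pos (mul_pos hsC₂ hFC₂) hTC₂
          have hr : s^(-C₂) * FedChi2.F (-C₂) / T'^(-C₂) ≤ Real.exp (-tL) := by
            rw [← Real.exp_log hrpos]
            apply Real.exp_le_exp.mpr
            have hlogr : Real.log (s^(-C₂) * FedChi2.F (-C₂) / T'^(-C₂))
                = -C₂*Real.log s + Real.log (FedChi2.F (-C₂)) + C₂*Real.log T' := by
              rw [Real.log_div (by positivity) hTC₂.ne',
                Real.log_mul hsC₂.ne' hFC₂.ne', Real.log_rpow hs, Real.log_rpow hT'pos]
              ring
            have hlogT' : Real.log T'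
                = Real.log (1-ε) + Real.log s + (ℓ:ℝ)*Real.log (FedChi2.F x) := by
              rw [hT'def, Real.log_mul (by positivity) (pow_pos hFx ℓ).ne',
                Real.log_mul hε1''.ne' hs.ne', Real.log_pow]
              try push_cast
              try ring
            rw [hlogr, hlogT', htL']
            have hkk := mul_le_mul_of_nonneg_left hkey_mono hC₂pos.le
            linarith
          calc (s^(-C₂) * FedChi2.F (-C₂) / T'^(-C₂))^ℓ ≤ (Real.exp (-tL))^ℓ :=
                pow_le_pow_left₀ hrpos.le hr ℓ
            _ = Real.exp (-((ℓ:ℝ)*tL)) := by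
                rw [← Real.exp_nat_mul]; congr 1; ring
            _ ≤ δ/2 := hexpL
  calc μ ({ω | shat ω < (1-ε)*s} ∪ {ω | shat ω > (1+ε)*s})
      ≤ μ {ω | shat ω < (1-ε)*s} + μ {ω | shat ω > (1+ε)*s} := measure_union_le _ _
    _ ≤ ENNReal.ofReal (δ/2) + ENNReal.ofReal (δ/2) := add_le_add hLeft hRight
    _ = ENNReal.ofReal δ := hhalf
end

section
/- Let G be an additive commutative group, n a positive integer, e : Fin n → G a family of inputs, and s : Fin n → Fin n → G a symmetric family of masks (i.e., s i j = s j i for all i, j). Define for each i the masked input y_i := e_i − ∑_{j : Fin n, j < i} s i j + ∑_{j : Fin n, i < j} s i j. Then ∑_{i} y_i = ∑_{i} e_i. -/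
open Finset

/-- Correctness of the secure aggregation protocol (Algorithm 3 of the paper):
the pairwise masks cancel in the sum, so the server recovers the sum of the
true inputs. -/
theorem secure_aggregation_correct
    {G : Type*} [AddCommGroup G] (n : ℕ) (hn : 0 < n)
    (e : Fin n → G) (s : Fin n → Fin n → G)
    (hsym : ∀ i j, s i j = s j i)
    (y : Fin n → G)
    (hy : ∀ i, y i = e i - (∑ j ∈ univ.filter (fun j => j < i), s i j)
      + ∑ j ∈ univ.filter (fun j => i < j), s i j) :
    ∑ i, y i = ∑ i, e i := by
  have key : ∑ i : Fin n, ∑ j ∈ univ.filter (fun j => j < i), s i j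
      = ∑ i : Fin n, ∑ j ∈ univ.filter (fun j => i < j), s i j := by
    rw [Finset.sum_sigma', Finset.sum_sigma']
    refine Finset.sum_nbij' (fun p => ⟨p.2, p.1⟩) (fun p => ⟨p.2, p.1⟩) ?_ ?_ ?_ ?_ ?_
    · intro p hp; simp_all
    · intro p hp; simp_all
    · intro p hp; rfl
    · intro p hp; rfl
    · intro p hp; exact hsym _ _
  simp only [hy, Finset.sum_add_distrib, Finset.sum_sub_distrib, key]
  abel
end
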